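/- arXiv:2101.08115 — 4 statements merged into one kernel-verified Lean document; each statement's English description precedes it below -/
import Mathlib

section
/- Let n ≥ 1 and let A = (a_{ij}) be a real n×n matrix. Let (u_1,…,u_n) be a radial solution of the Liouville system on (0,∞) such that for each i: lim_{r→0+} r·u_i'(r) = 0 and the function r ↦ r·e^{u_i(r)} is integrable on (0,∞). Set m_i = ∫_0^∞ (∑_{j=1}^n a_{ij} e^{u_j(r)}) r dr and m = min_i m_i, and assume m > 2. Assume further that there exist constants L_1,…,L_n ∈ ℝ, δ₀ ∈ (0,1) and C₀ > 0 such that |u_i(r) + m_i·log r − L_i| ≤ C₀·r^{−δ₀} for all r ≥ 1 and all i. Then there exist δ > 0 and C > 0 such that for all r ≥ 1 and all i = 1,…,n: |u_i(r) + m_i·log r − L_i + ∑_{j=1}^n (a_{ij}/(m_j−2)²)·e^{L_j}·r^{2−m_j}| ≤ C·r^{2−m−δ}. -/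
open MeasureTheory Filter

lemma aux_abs_exp_sub_one (x : ℝ) : |Real.exp x - 1| ≤ |x| * Real.exp |x| := by
  rcases le_or_gt 0 x with hx | hx
  · rw [abs_of_nonneg hx, abs_of_nonneg (by linarith [Real.one_le_exp hx] : (0:ℝ) ≤ Real.exp x - 1)]
    have h := Real.add_one_le_exp (-x)
    rw [Real.exp_neg] at h
    have h2 := mul_le_mul_of_nonneg_right h (le_of_lt (Real.exp_pos x))
    rw [inv_mul_cancel₀ (ne_of_gt (Real.exp_pos x))] at h2
    nlinarith
  · have h1 : Real.exp x < 1 := Real.exp_lt_one_iff.mpr hx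
    rw [abs_of_neg hx, abs_of_nonpos (by linarith : Real.exp x - 1 ≤ 0)]
    nlinarith [Real.add_one_le_exp x, Real.one_le_exp (le_of_lt (neg_pos.mpr hx))]

lemma tail_rpow_integral {q t : ℝ} (hq : 2 < q) (ht : 0 < t) :
    ∫ s in Set.Ioi t, s ^ (1 - q) = t ^ (2 - q) / (q - 2) := by
  rw [integral_Ioi_rpow_of_lt (by linarith) ht, show (1 - q) + 1 = 2 - q by ring,
    div_eq_div_iff (by intro h; apply absurd h; intro h'; linarith [sub_eq_zero.mp h'] : (2 - q) ≠ 0)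
      (by intro h; linarith [sub_eq_zero.mp h] : (q - 2) ≠ 0)]
  ring

/-- `(u_1,…,u_n)` is a radial solution of the Liouville system
`u_i'' + u_i'/r = -∑_j a_{ij} e^{u_j}` on the set `J ⊆ (0,∞)`. -/
def IsRadialSolution {n : ℕ} (A : Fin n → Fin n → ℝ) (u : Fin n → ℝ → ℝ) (J : Set ℝ) : Prop :=
  ∀ i : Fin n, ∀ r ∈ J,
    DifferentiableAt ℝ (u i) r ∧ DifferentiableAt ℝ (deriv (u i)) r ∧
    deriv (deriv (u i)) r + deriv (u i) r / r = -∑ j, A i j * Real.exp (u j r)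

theorem refined_expansion_of_radial_solutions
    (n : ℕ) (hn : 1 ≤ n) (A : Fin n → Fin n → ℝ) (u : Fin n → ℝ → ℝ)
    (hsol : IsRadialSolution A u (Set.Ioi 0))
    (hlim0 : ∀ i, Tendsto (fun r => r * deriv (u i) r) (nhdsWithin 0 (Set.Ioi 0)) (nhds 0))
    (hint : ∀ i, IntegrableOn (fun r => r * Real.exp (u i r)) (Set.Ioi 0))
    (mi : Fin n → ℝ)
    (hmi : ∀ i, mi i = ∫ r in Set.Ioi (0:ℝ), (∑ j, A i j * Real.exp (u j r)) * r)
    (m : ℝ) (hm_le : ∀ i, m ≤ mi i) (hm_min : ∃ i, mi i = m) (hm2 : 2 < m)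
    (L : Fin n → ℝ) (δ₀ C₀ : ℝ) (hδ₀ : δ₀ ∈ Set.Ioo (0:ℝ) 1) (hC₀ : 0 < C₀)
    (hexp : ∀ i, ∀ r : ℝ, 1 ≤ r → |u i r + mi i * Real.log r - L i| ≤ C₀ * r ^ (-δ₀)) :
    ∃ δ > (0:ℝ), ∃ C > (0:ℝ), ∀ r : ℝ, 1 ≤ r → ∀ i,
      |u i r + mi i * Real.log r - L i +
          ∑ j, (A i j / (mi j - 2) ^ 2) * Real.exp (L j) * r ^ (2 - mi j)|
        ≤ C * r ^ (2 - m - δ) := by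
  obtain ⟨hδ0, hδ1⟩ := hδ₀
  have hmi2 : ∀ j, 2 < mi j := fun j => lt_of_lt_of_le hm2 (hm_le j)
  -- the source term multiplied by r
  set w : Fin n → ℝ → ℝ := fun i s => (∑ j, A i j * Real.exp (u j s)) * s with hw_def
  -- integrability of w
  have hw_eq : ∀ i, w i = fun s => ∑ j, A i j * (s * Real.exp (u j s)) := by
    intro i
    funext s
    simp only [hw_def, Finset.sum_mul]
    exact Finset.sum_congr rfl (fun j _ => by ring)
  have hw_int : ∀ i, IntegrableOn (w i) (Set.Ioi 0) := by
    intro i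
    rw [hw_eq]
    exact integrable_finset_sum _ (fun j _ => ((hint j).const_mul _))
  -- derivative of r u'
  have hD : ∀ i, ∀ t ∈ Set.Ioi (0:ℝ), HasDerivAt (fun s => s * deriv (u i) s) (-w i t) t := by
    intro i t ht
    obtain ⟨h1, h2, h3⟩ := hsol i t ht
    have ht0 : (t:ℝ) ≠ 0 := ne_of_gt ht
    have hd := (hasDerivAt_id t).mul h2.hasDerivAt
    refine hd.congr_deriv (Eq.symm ?_)
    have hs : deriv (deriv (u i)) t = -(∑ j, A i j * Real.exp (u j t)) - deriv (u i) t / t := by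
      linarith
    rw [hs]
    simp only [hw_def, id_eq]
    field_simp
    ring
  -- FTC between positive points
  have hFTC : ∀ i, ∀ a b : ℝ, 0 < a → a ≤ b →
      b * deriv (u i) b - a * deriv (u i) a = -∫ s in Set.Ioc a b, w i s := by
    intro i a b ha hab
    have hsub : Set.Ioc a b ⊆ Set.Ioi 0 := fun x hx => lt_trans ha hx.1
    have hii : IntervalIntegrable (fun s => -w i s) volume a b := by
      rw [intervalIntegrable_iff_integrableOn_Ioc_of_le hab]
      exact ((hw_int i).mono_set hsub).neg
    have heq := intervalIntegral.integral_eq_sub_of_hasDerivAt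
      (f := fun s => s * deriv (u i) s) (f' := fun s => -w i s)
      (fun t htmem => by
        refine hD i t ?_
        rw [Set.uIcc_of_le hab] at htmem
        exact lt_of_lt_of_le ha htmem.1) hii
    rw [intervalIntegral.integral_of_le hab, MeasureTheory.integral_neg] at heq
    simpa using heq.symm
  -- the cumulative integral
  have hsplitIoc : ∀ i, ∀ a b : ℝ, 0 ≤ a → a ≤ b →
      (∫ s in Set.Ioc 0 a, w i s) + (∫ s in Set.Ioc a b, w i s) = ∫ s in Set.Ioc 0 b, w i s := by
    intro i a b ha hab
    rw [← MeasureTheory.setIntegral_union (Set.Ioc_disjoint_Ioc_of_le le_rfl) measurableSet_Ioc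
      ((hw_int i).mono_set Set.Ioc_subset_Ioi_self)
      ((hw_int i).mono_set (fun x hx => lt_of_le_of_lt ha hx.1)),
      Set.Ioc_union_Ioc_eq_Ioc ha hab]
  have h1 : ∀ i, ∀ b : ℝ, 0 < b → b * deriv (u i) b = -∫ s in Set.Ioc 0 b, w i s := by
    intro i b hb
    have hsmall : Tendsto (fun a => ∫ s in Set.Ioc 0 a, w i s) (nhdsWithin 0 (Set.Ioi 0)) (nhds 0) := by
      have hres : ∀ a : ℝ, (∫ s in Set.Ioc 0 a, w i s) =
          ∫ s in Set.Ioc 0 a, w i s ∂(volume.restrict (Set.Ioi 0)) := by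
        intro a
        rw [Measure.restrict_restrict measurableSet_Ioc]
        congr 1
        rw [Set.inter_eq_left.mpr Set.Ioc_subset_Ioi_self]
      simp_rw [hres]
      refine (hw_int i).tendsto_setIntegral_nhds_zero ?_
      have : ∀ a : ℝ, (volume.restrict (Set.Ioi (0:ℝ))) (Set.Ioc 0 a) = ENNReal.ofReal a := by
        intro a
        rw [Measure.restrict_apply measurableSet_Ioc,
          Set.inter_eq_left.mpr Set.Ioc_subset_Ioi_self, Real.volume_Ioc, sub_zero]
      simp only [Function.comp_def, this]
      have h0 : Tendsto (fun a : ℝ => a) (nhdsWithin 0 (Set.Ioi 0)) (nhds 0) :=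
        tendsto_id.mono_left nhdsWithin_le_nhds
      simpa [Function.comp_def] using (ENNReal.continuous_ofReal.tendsto 0).comp h0
    have key : Tendsto (fun a => b * deriv (u i) b - a * deriv (u i) a)
        (nhdsWithin 0 (Set.Ioi 0)) (nhds (b * deriv (u i) b)) := by
      simpa using tendsto_const_nhds.sub (hlim0 i)
    have key2 : Tendsto (fun a => b * deriv (u i) b - a * deriv (u i) a)
        (nhdsWithin 0 (Set.Ioi 0)) (nhds (-∫ s in Set.Ioc 0 b, w i s)) := by
      have h3 : Tendsto (fun a => -((∫ s in Set.Ioc 0 b, w i s) - ∫ s in Set.Ioc 0 a, w i s))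
          (nhdsWithin 0 (Set.Ioi 0)) (nhds (-((∫ s in Set.Ioc 0 b, w i s) - 0))) :=
        (tendsto_const_nhds.sub hsmall).neg
      rw [sub_zero] at h3
      refine h3.congr' ?_
      have hmem : Set.Ioo (0:ℝ) b ∈ nhdsWithin 0 (Set.Ioi 0) := by
        apply Ioo_mem_nhdsGT_of_mem
        exact ⟨le_refl 0, hb⟩
      filter_upwards [hmem] with a ha
      have := hsplitIoc i a b ha.1.le ha.2.le
      have hF := hFTC i a b ha.1 ha.2.le
      linarith
    exact tendsto_nhds_unique key key2
  -- tail integral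
  set T : Fin n → ℝ → ℝ := fun i t => ∫ s in Set.Ioi t, w i s with hT_def
  have hsplit : ∀ i, ∀ b : ℝ, 0 < b → mi i = (∫ s in Set.Ioc 0 b, w i s) + T i b := by
    intro i b hb
    rw [hmi i, hT_def]
    rw [← Set.Ioc_union_Ioi_eq_Ioi hb.le,
      MeasureTheory.setIntegral_union Set.Ioc_disjoint_Ioi_same measurableSet_Ioi
        ((hw_int i).mono_set Set.Ioc_subset_Ioi_self)
        ((hw_int i).mono_set (Set.Ioi_subset_Ioi hb.le))]
  -- derivative of v i = u i + mi i * log - L i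
  set v : Fin n → ℝ → ℝ := fun i r => u i r + mi i * Real.log r - L i with hv_def
  have hv' : ∀ i, ∀ b : ℝ, 0 < b → HasDerivAt (v i) (T i b / b) b := by
    intro i b hb
    have hdu : HasDerivAt (u i) (deriv (u i) b) b := (hsol i b hb).1.hasDerivAt
    have hlog : HasDerivAt Real.log b⁻¹ b := Real.hasDerivAt_log (ne_of_gt hb)
    have hdv : HasDerivAt (v i) (deriv (u i) b + mi i * b⁻¹) b := by
      rw [hv_def]
      exact (hdu.add (hlog.const_mul (mi i))).sub_const (L i)
    convert hdv using 1
    have e1 := h1 i b hb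
    have e2 := hsplit i b hb
    have hb0 : b ≠ 0 := ne_of_gt hb
    field_simp
    linarith
  -- pointwise estimate on the integrand
  set K : Fin n → ℝ := fun j => C₀ * Real.exp C₀ * Real.exp (L j) with hK_def
  have hK0 : ∀ j, 0 < K j := fun j => by positivity
  have hpt : ∀ j, ∀ s : ℝ, 1 ≤ s →
      |s * Real.exp (u j s) - Real.exp (L j) * s ^ (1 - mi j)| ≤ K j * s ^ (1 - mi j - δ₀) := by
    intro j s hs
    have hs0 : (0:ℝ) < s := lt_of_lt_of_le one_pos hs
    have hvdef : u j s = L j + Real.log s * (-mi j) + v j s := by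
      rw [hv_def]; ring
    have hexpu : Real.exp (u j s) = Real.exp (L j) * s ^ (-mi j) * Real.exp (v j s) := by
      rw [hvdef, Real.rpow_def_of_pos hs0, ← Real.exp_add, ← Real.exp_add]
    have hfactor : s * Real.exp (u j s) - Real.exp (L j) * s ^ (1 - mi j)
        = Real.exp (L j) * s ^ (1 - mi j) * (Real.exp (v j s) - 1) := by
      rw [hexpu]
      have : s ^ (1 - mi j) = s * s ^ (-mi j) := by
        rw [show (1 - mi j) = 1 + (-mi j) by ring, Real.rpow_add hs0, Real.rpow_one]
      rw [this]; ring
    rw [hfactor, abs_mul]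
    have habsv : |v j s| ≤ C₀ * s ^ (-δ₀) := hexp j s hs
    have hsneg : s ^ (-δ₀) ≤ 1 := by
      apply Real.rpow_le_one_of_one_le_of_nonpos hs (by linarith)
    have habsv1 : |v j s| ≤ C₀ := le_trans habsv (by nlinarith)
    have h2 : |Real.exp (v j s) - 1| ≤ (C₀ * s ^ (-δ₀)) * Real.exp C₀ := by
      refine le_trans (aux_abs_exp_sub_one (v j s)) ?_
      have he : Real.exp |v j s| ≤ Real.exp C₀ := Real.exp_le_exp.mpr habsv1
      have h0 : (0:ℝ) ≤ |v j s| := abs_nonneg _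
      nlinarith [Real.exp_pos |v j s|]
    have hA : |Real.exp (L j) * s ^ (1 - mi j)| = Real.exp (L j) * s ^ (1 - mi j) := by
      rw [abs_of_nonneg]; positivity
    rw [hA]
    calc Real.exp (L j) * s ^ (1 - mi j) * |Real.exp (v j s) - 1|
        ≤ Real.exp (L j) * s ^ (1 - mi j) * ((C₀ * s ^ (-δ₀)) * Real.exp C₀) := by
          apply mul_le_mul_of_nonneg_left h2; positivity
      _ = K j * (s ^ (1 - mi j) * s ^ (-δ₀)) := by rw [hK_def]; ring
      _ = K j * s ^ (1 - mi j - δ₀) := by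
          rw [← Real.rpow_add hs0, show (1 - mi j) + (-δ₀) = 1 - mi j - δ₀ by ring]
  -- upper bound for the integrand
  have hub : ∀ j, ∀ s : ℝ, 1 ≤ s →
      s * Real.exp (u j s) ≤ (Real.exp (L j) + K j) * s ^ (1 - m) := by
    intro j s hs
    have hs0 : (0:ℝ) < s := lt_of_lt_of_le one_pos hs
    have h1' := hpt j s hs
    have h2 : s * Real.exp (u j s) ≤ Real.exp (L j) * s ^ (1 - mi j) + K j * s ^ (1 - mi j - δ₀) := by
      have := abs_le.mp h1'
      linarith [this.2]
    have h3 : s ^ (1 - mi j) ≤ s ^ (1 - m) :=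
      Real.rpow_le_rpow_of_exponent_le hs (by linarith [hm_le j])
    have h4 : s ^ (1 - mi j - δ₀) ≤ s ^ (1 - m) :=
      Real.rpow_le_rpow_of_exponent_le hs (by linarith [hm_le j])
    nlinarith [Real.exp_pos (L j), hK0 j]
  have hm20 : (0:ℝ) < m - 2 := by linarith
  have hmd0 : (0:ℝ) < m - 2 + δ₀ := by linarith
  -- per-j tail difference bound
  have hperj : ∀ j, ∀ t : ℝ, 1 ≤ t →
      |∫ s in Set.Ioi t, (s * Real.exp (u j s) - Real.exp (L j) * s ^ (1 - mi j))|
        ≤ K j * (t ^ (2 - (m + δ₀)) / ((m + δ₀) - 2)) := by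
    intro j t ht
    have ht0 : (0:ℝ) < t := lt_of_lt_of_le one_pos ht
    have hmaj : IntegrableOn (fun s : ℝ => K j * s ^ (1 - (m + δ₀))) (Set.Ioi t) :=
      (integrableOn_Ioi_rpow_of_lt (by linarith) ht0).const_mul _
    have hae : ∀ᵐ s ∂(volume.restrict (Set.Ioi t)),
        ‖s * Real.exp (u j s) - Real.exp (L j) * s ^ (1 - mi j)‖ ≤ K j * s ^ (1 - (m + δ₀)) := by
      filter_upwards [MeasureTheory.ae_restrict_mem measurableSet_Ioi] with s hsmem
      have hs1 : (1:ℝ) ≤ s := le_trans ht (le_of_lt hsmem)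
      rw [Real.norm_eq_abs]
      refine le_trans (hpt j s hs1) ?_
      apply mul_le_mul_of_nonneg_left _ (hK0 j).le
      exact Real.rpow_le_rpow_of_exponent_le hs1 (by linarith [hm_le j])
    have hb := MeasureTheory.norm_integral_le_of_norm_le hmaj hae
    rw [Real.norm_eq_abs] at hb
    refine le_trans hb (le_of_eq ?_)
    rw [MeasureTheory.integral_const_mul, tail_rpow_integral (by linarith) ht0]
  -- tail difference bound
  have hTdiff : ∀ i, ∀ t : ℝ, 1 ≤ t →
      |T i t - ∑ j, A i j * (Real.exp (L j) * (t ^ (2 - mi j) / (mi j - 2)))|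
        ≤ (∑ j, |A i j| * K j) * (t ^ (2 - (m + δ₀)) / ((m + δ₀) - 2)) := by
    intro i t ht
    have ht0 : (0:ℝ) < t := lt_of_lt_of_le one_pos ht
    have hint1 : ∀ j : Fin n, IntegrableOn (fun s => s * Real.exp (u j s)) (Set.Ioi t) :=
      fun j => (hint j).mono_set (Set.Ioi_subset_Ioi ht0.le)
    have hint2 : ∀ j : Fin n, IntegrableOn (fun s : ℝ => Real.exp (L j) * s ^ (1 - mi j)) (Set.Ioi t) :=
      fun j => (integrableOn_Ioi_rpow_of_lt (by linarith [hmi2 j]) ht0).const_mul _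
    have hTsum : T i t = ∑ j, A i j * ∫ s in Set.Ioi t, s * Real.exp (u j s) := by
      rw [hT_def]
      simp only
      rw [hw_eq]
      rw [MeasureTheory.integral_finset_sum _ (fun j _ => (hint1 j).const_mul _)]
      exact Finset.sum_congr rfl (fun j _ => MeasureTheory.integral_const_mul _ _)
    have hmainj : ∀ j : Fin n, Real.exp (L j) * (t ^ (2 - mi j) / (mi j - 2))
        = ∫ s in Set.Ioi t, Real.exp (L j) * s ^ (1 - mi j) := by
      intro j
      rw [MeasureTheory.integral_const_mul, tail_rpow_integral (hmi2 j) ht0]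
    have hkey : T i t - ∑ j, A i j * (Real.exp (L j) * (t ^ (2 - mi j) / (mi j - 2)))
        = ∑ j, A i j * ∫ s in Set.Ioi t, (s * Real.exp (u j s) - Real.exp (L j) * s ^ (1 - mi j)) := by
      rw [hTsum, ← Finset.sum_sub_distrib]
      refine Finset.sum_congr rfl (fun j _ => ?_)
      rw [hmainj j, ← mul_sub, ← MeasureTheory.integral_sub (hint1 j) (hint2 j)]
    rw [hkey]
    refine le_trans (Finset.abs_sum_le_sum_abs _ _) ?_
    rw [Finset.sum_mul]
    refine Finset.sum_le_sum (fun j _ => ?_)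
    rw [abs_mul]
    refine le_trans (mul_le_mul_of_nonneg_left (hperj j t ht) (abs_nonneg _)) ?_
    refine le_of_eq ?_
    simp only [hK_def]
    ring
  -- tail upper bound
  have hTub : ∀ i, ∀ t : ℝ, 1 ≤ t →
      |T i t| ≤ (∑ j, |A i j| * (Real.exp (L j) + K j)) * (t ^ (2 - m) / (m - 2)) := by
    intro i t ht
    have ht0 : (0:ℝ) < t := lt_of_lt_of_le one_pos ht
    have hint1 : ∀ j : Fin n, IntegrableOn (fun s => s * Real.exp (u j s)) (Set.Ioi t) :=
      fun j => (hint j).mono_set (Set.Ioi_subset_Ioi ht0.le)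
    have hTsum : T i t = ∑ j, A i j * ∫ s in Set.Ioi t, s * Real.exp (u j s) := by
      rw [hT_def]
      simp only
      rw [hw_eq]
      rw [MeasureTheory.integral_finset_sum _ (fun j _ => (hint1 j).const_mul _)]
      exact Finset.sum_congr rfl (fun j _ => MeasureTheory.integral_const_mul _ _)
    have hj : ∀ j : Fin n, |∫ s in Set.Ioi t, s * Real.exp (u j s)|
        ≤ (Real.exp (L j) + K j) * (t ^ (2 - m) / (m - 2)) := by
      intro j
      have hmaj : IntegrableOn (fun s : ℝ => (Real.exp (L j) + K j) * s ^ (1 - m)) (Set.Ioi t) :=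
        (integrableOn_Ioi_rpow_of_lt (by linarith) ht0).const_mul _
      have hae : ∀ᵐ s ∂(volume.restrict (Set.Ioi t)),
          ‖s * Real.exp (u j s)‖ ≤ (Real.exp (L j) + K j) * s ^ (1 - m) := by
        filter_upwards [MeasureTheory.ae_restrict_mem measurableSet_Ioi] with s hsmem
        have hs1 : (1:ℝ) ≤ s := le_trans ht (le_of_lt hsmem)
        rw [Real.norm_eq_abs, abs_of_nonneg (by positivity : (0:ℝ) ≤ s * Real.exp (u j s))]
        exact hub j s hs1
      have hb := MeasureTheory.norm_integral_le_of_norm_le hmaj hae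
      rw [Real.norm_eq_abs] at hb
      refine le_trans hb (le_of_eq ?_)
      rw [MeasureTheory.integral_const_mul, tail_rpow_integral hm2 ht0]
    rw [hTsum]
    refine le_trans (Finset.abs_sum_le_sum_abs _ _) ?_
    rw [Finset.sum_mul]
    refine Finset.sum_le_sum (fun j _ => ?_)
    rw [abs_mul]
    refine le_trans (mul_le_mul_of_nonneg_left (hj j) (abs_nonneg _)) ?_
    refine le_of_eq ?_
    ring
  -- integrability of T i t / t on tails
  set E : Fin n → ℝ := fun i => (∑ j, |A i j| * (Real.exp (L j) + K j)) / (m - 2) with hE_def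
  have hφint : ∀ i, ∀ r : ℝ, 1 ≤ r → IntegrableOn (fun t => T i t / t) (Set.Ioi r) := by
    intro i r hr
    have hr0 : (0:ℝ) < r := lt_of_lt_of_le one_pos hr
    have hmeas : AEStronglyMeasurable (fun t => T i t / t) (volume.restrict (Set.Ioi r)) := by
      refine (aestronglyMeasurable_deriv (v i) _).congr ?_
      filter_upwards [MeasureTheory.ae_restrict_mem measurableSet_Ioi] with t htmem
      exact (hv' i t (lt_trans hr0 htmem)).deriv
    refine Integrable.mono'
      ((integrableOn_Ioi_rpow_of_lt (show (1:ℝ) - m < -1 by linarith) hr0).const_mul (E i))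
      hmeas ?_
    filter_upwards [MeasureTheory.ae_restrict_mem measurableSet_Ioi] with t htmem
    have ht1 : (1:ℝ) ≤ t := le_trans hr (le_of_lt htmem)
    have ht0 : (0:ℝ) < t := lt_of_lt_of_le one_pos ht1
    rw [Real.norm_eq_abs, abs_div, abs_of_pos ht0]
    have h2 : |T i t| / t ≤ (∑ j, |A i j| * (Real.exp (L j) + K j)) * (t ^ (2 - m) / (m - 2)) / t := by
      gcongr
      exact hTub i t ht1
    refine le_trans h2 (le_of_eq ?_)
    have h3 : t ^ ((1:ℝ) - m) = t ^ ((2:ℝ) - m) / t := by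
      rw [show (1:ℝ) - m = (2 - m) - 1 by ring, Real.rpow_sub ht0, Real.rpow_one]
    simp only [hE_def]
    rw [h3]
    field_simp
  -- integral representation of v
  have hv_repr : ∀ i, ∀ r : ℝ, 1 ≤ r → v i r = -∫ t in Set.Ioi r, T i t / t := by
    intro i r hr
    have hr0 : (0:ℝ) < r := lt_of_lt_of_le one_pos hr
    have hFTCv : ∀ R : ℝ, r ≤ R → (∫ t in r..R, T i t / t) = v i R - v i r := by
      intro R hR
      refine intervalIntegral.integral_eq_sub_of_hasDerivAt (fun t htmem => ?_) ?_
      · rw [Set.uIcc_of_le hR] at htmem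
        exact hv' i t (lt_of_lt_of_le hr0 htmem.1)
      · rw [intervalIntegrable_iff_integrableOn_Ioc_of_le hR]
        exact (hφint i r hr).mono_set Set.Ioc_subset_Ioi_self
    have h2 : Tendsto (fun R => ∫ t in r..R, T i t / t) atTop
        (nhds (∫ t in Set.Ioi r, T i t / t)) :=
      MeasureTheory.intervalIntegral_tendsto_integral_Ioi r (hφint i r hr) tendsto_id
    have hv0 : Tendsto (fun R => v i R) atTop (nhds 0) := by
      have hg : Tendsto (fun R : ℝ => C₀ * R ^ (-δ₀)) atTop (nhds 0) := by
        simpa using (tendsto_rpow_neg_atTop hδ0).const_mul C₀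
      refine squeeze_zero_norm' ?_ hg
      filter_upwards [eventually_ge_atTop (1:ℝ)] with R hR
      rw [Real.norm_eq_abs]
      exact hexp i R hR
    have h3 : Tendsto (fun R => v i R - v i r) atTop (nhds (0 - v i r)) :=
      hv0.sub tendsto_const_nhds
    rw [zero_sub] at h3
    have h4 : Tendsto (fun R => ∫ t in r..R, T i t / t) atTop (nhds (- v i r)) := by
      refine h3.congr' ?_
      filter_upwards [eventually_ge_atTop r] with R hR
      exact (hFTCv R hR).symm
    have h5 := tendsto_nhds_unique h2 h4
    linarith
  -- the explicit main-term integral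
  have hmain_int : ∀ i, ∀ r : ℝ, 0 < r → IntegrableOn
      (fun t : ℝ => ∑ j, A i j * (Real.exp (L j) * t ^ (1 - mi j) / (mi j - 2))) (Set.Ioi r) := by
    intro i r hr0
    apply MeasureTheory.integrable_finset_sum
    intro j _
    have heq : (fun t : ℝ => A i j * (Real.exp (L j) * t ^ (1 - mi j) / (mi j - 2)))
        = fun t : ℝ => (A i j * Real.exp (L j) / (mi j - 2)) * t ^ (1 - mi j) := by
      funext t; ring
    rw [heq]
    exact (integrableOn_Ioi_rpow_of_lt (by linarith [hmi2 j]) hr0).const_mul _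
  have hmain_val : ∀ i, ∀ r : ℝ, 0 < r →
      (∫ t in Set.Ioi r, ∑ j, A i j * (Real.exp (L j) * t ^ (1 - mi j) / (mi j - 2)))
        = ∑ j, A i j / (mi j - 2) ^ 2 * Real.exp (L j) * r ^ (2 - mi j) := by
    intro i r hr0
    rw [MeasureTheory.integral_finset_sum _ (fun j _ => by
      have heq : (fun t : ℝ => A i j * (Real.exp (L j) * t ^ (1 - mi j) / (mi j - 2)))
          = fun t : ℝ => (A i j * Real.exp (L j) / (mi j - 2)) * t ^ (1 - mi j) := by
        funext t; ring
      rw [heq]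
      exact ((integrableOn_Ioi_rpow_of_lt (by linarith [hmi2 j]) hr0).const_mul _))]
    refine Finset.sum_congr rfl (fun j _ => ?_)
    have heq : (fun t : ℝ => A i j * (Real.exp (L j) * t ^ (1 - mi j) / (mi j - 2)))
        = fun t : ℝ => (A i j * Real.exp (L j) / (mi j - 2)) * t ^ (1 - mi j) := by
      funext t; ring
    rw [show (∫ t in Set.Ioi r, A i j * (Real.exp (L j) * t ^ (1 - mi j) / (mi j - 2)))
        = ∫ t in Set.Ioi r, (A i j * Real.exp (L j) / (mi j - 2)) * t ^ (1 - mi j) from by rw [heq],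
      MeasureTheory.integral_const_mul, tail_rpow_integral (hmi2 j) hr0]
    have hne : mi j - 2 ≠ 0 := by intro h; linarith [sub_eq_zero.mp h, hmi2 j]
    rw [pow_two]
    field_simp
  -- final assembly
  refine ⟨δ₀, hδ0, ?_⟩
  set K2 : Fin n → ℝ := fun i => (∑ j, |A i j| * K j) / ((m + δ₀ - 2) * (m + δ₀ - 2)) with hK2_def
  have hK2_0 : ∀ i, 0 ≤ K2 i := by
    intro i
    apply div_nonneg _ (by nlinarith)
    exact Finset.sum_nonneg (fun j _ => mul_nonneg (abs_nonneg _) (hK0 j).le)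
  have hC_pos : (0:ℝ) < (∑ i, K2 i) + 1 := by
    have := Finset.sum_nonneg (fun i (_ : i ∈ Finset.univ) => hK2_0 i)
    linarith
  refine ⟨(∑ i, K2 i) + 1, hC_pos, ?_⟩
  intro r hr i
  have hr0 : (0:ℝ) < r := lt_of_lt_of_le one_pos hr
  have hmd2 : (0:ℝ) < m + δ₀ - 2 := by linarith
  have hkey : u i r + mi i * Real.log r - L i +
      ∑ j, A i j / (mi j - 2) ^ 2 * Real.exp (L j) * r ^ (2 - mi j)
      = ∫ t in Set.Ioi r,
        ((∑ j, A i j * (Real.exp (L j) * t ^ (1 - mi j) / (mi j - 2))) - T i t / t) := by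
    have hvv : v i r = -∫ t in Set.Ioi r, T i t / t := hv_repr i r hr
    simp only [hv_def] at hvv
    rw [MeasureTheory.integral_sub (hmain_int i r hr0) (hφint i r hr), hmain_val i r hr0]
    linarith [hvv]
  rw [hkey]
  have hmaj : IntegrableOn
      (fun t : ℝ => ((∑ j, |A i j| * K j) / (m + δ₀ - 2)) * t ^ (1 - (m + δ₀))) (Set.Ioi r) :=
    (integrableOn_Ioi_rpow_of_lt (by linarith) hr0).const_mul _
  have hae : ∀ᵐ t ∂(volume.restrict (Set.Ioi r)),
      ‖(∑ j, A i j * (Real.exp (L j) * t ^ (1 - mi j) / (mi j - 2))) - T i t / t‖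
        ≤ ((∑ j, |A i j| * K j) / (m + δ₀ - 2)) * t ^ (1 - (m + δ₀)) := by
    filter_upwards [MeasureTheory.ae_restrict_mem measurableSet_Ioi] with t htmem
    have ht1 : (1:ℝ) ≤ t := le_trans hr (le_of_lt htmem)
    have ht0 : (0:ℝ) < t := lt_of_lt_of_le one_pos ht1
    have hjj : ∀ j : Fin n, A i j * (Real.exp (L j) * (t ^ (2 - mi j) / (mi j - 2)))
        = (A i j * (Real.exp (L j) * t ^ (1 - mi j) / (mi j - 2))) * t := by
      intro j
      rw [show (2:ℝ) - mi j = (1 - mi j) + 1 by ring, Real.rpow_add ht0, Real.rpow_one]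
      ring
    have hmt : (∑ j, A i j * (Real.exp (L j) * t ^ (1 - mi j) / (mi j - 2))) - T i t / t
        = -((T i t - ∑ j, A i j * (Real.exp (L j) * (t ^ (2 - mi j) / (mi j - 2)))) / t) := by
      rw [Finset.sum_congr rfl (fun j _ => hjj j), ← Finset.sum_mul]
      field_simp
      ring
    rw [Real.norm_eq_abs, hmt, abs_neg, abs_div, abs_of_pos ht0]
    have h2 : |T i t - ∑ j, A i j * (Real.exp (L j) * (t ^ (2 - mi j) / (mi j - 2)))| / t
        ≤ ((∑ j, |A i j| * K j) * (t ^ (2 - (m + δ₀)) / (m + δ₀ - 2))) / t := by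
      gcongr
      exact hTdiff i t ht1
    refine le_trans h2 (le_of_eq ?_)
    have hpow : t ^ ((2:ℝ) - (m + δ₀)) = t ^ ((1:ℝ) - (m + δ₀)) * t := by
      rw [show (2:ℝ) - (m + δ₀) = (1 - (m + δ₀)) + 1 by ring, Real.rpow_add ht0, Real.rpow_one]
    rw [hpow]
    field_simp
  have hbound := MeasureTheory.norm_integral_le_of_norm_le hmaj hae
  rw [Real.norm_eq_abs] at hbound
  refine le_trans hbound ?_
  rw [MeasureTheory.integral_const_mul, tail_rpow_integral (by linarith : (2:ℝ) < m + δ₀) hr0]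
  have hexp_eq : r ^ ((2:ℝ) - (m + δ₀)) = r ^ (2 - m - δ₀) := by
    rw [show (2:ℝ) - (m + δ₀) = 2 - m - δ₀ by ring]
  have hK2i : ((∑ j, |A i j| * K j) / (m + δ₀ - 2)) * (r ^ (2 - (m + δ₀)) / (m + δ₀ - 2))
      = K2 i * r ^ (2 - (m + δ₀)) := by
    simp only [hK2_def]
    rw [div_mul_div_comm, div_mul_eq_mul_div]
  rw [hK2i, hexp_eq]
  have hle : K2 i ≤ (∑ i', K2 i') + 1 := by
    have := Finset.single_le_sum (f := K2) (fun j _ => hK2_0 j) (Finset.mem_univ i)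
    linarith
  exact mul_le_mul_of_nonneg_right hle (Real.rpow_nonneg hr0.le _)
end

section
/- Let n ≥ 1 and let A = (a_{ij}) be a real n×n matrix. Let (u_1,…,u_n) be a radial solution of the Liouville system on (0,∞) such that for each i: lim_{r→0+} r·u_i'(r) = 0 and r ↦ r·e^{u_i(r)} is integrable on (0,∞). Set m_i = ∫_0^∞ (∑_{j=1}^n a_{ij} e^{u_j(r)}) r dr. Assume there are constants c_1,…,c_n ∈ ℝ, exponents m_1,…,m_n with m := min_j m_j > 2, δ ∈ (0,1) and C₀ > 0 such that |e^{u_j(r)} − e^{c_j}·r^{−m_j}| ≤ C₀·r^{−m−δ} for all r ≥ 1 and all j. Then there exists C > 0 such that for all r ≥ 1 and all i: |u_i'(r) + m_i/r − ∑_{j=1}^n (a_{ij}·e^{c_j}/(m_j−2))·r^{1−m_j}| ≤ C·r^{1−m−δ}. -/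
open MeasureTheory Filter Topology

/-- Tail estimate for a single component. -/
lemma tail_est (v : ℝ → ℝ) (ec p C₀ m δ r : ℝ) (hr : 1 ≤ r) (hp : 2 < p)
    (hmδ : 2 < m + δ)
    (hvint : IntegrableOn (fun s => s * Real.exp (v s)) (Set.Ioi r))
    (hdec : ∀ s : ℝ, 1 ≤ s → |Real.exp (v s) - ec * s ^ (-p)| ≤ C₀ * s ^ (-m - δ)) :
    |(∫ s in Set.Ioi r, s * Real.exp (v s)) - ec * r ^ (2 - p) / (p - 2)|
      ≤ (C₀ / (m + δ - 2)) * r ^ (2 - m - δ) := by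
  have hr0 : (0:ℝ) < r := lt_of_lt_of_le one_pos hr
  have h1p : (1:ℝ) - p < -1 := by linarith
  have h1m : (1:ℝ) - m - δ < -1 := by linarith
  have h1 : IntegrableOn (fun s : ℝ => ec * s ^ ((1:ℝ) - p)) (Set.Ioi r) :=
    (integrableOn_Ioi_rpow_of_lt h1p hr0).const_mul ec
  have h2 : (∫ s in Set.Ioi r, ec * s ^ ((1:ℝ) - p)) = ec * r ^ (2 - p) / (p - 2) := by
    rw [integral_const_mul, integral_Ioi_rpow_of_lt h1p hr0,
      show (1:ℝ) - p + 1 = 2 - p by ring, show (2:ℝ) - p = -(p - 2) by ring,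
      neg_div_neg_eq]
    ring
  have hsub : (∫ s in Set.Ioi r, s * Real.exp (v s)) - ec * r ^ (2 - p) / (p - 2)
      = ∫ s in Set.Ioi r, (s * Real.exp (v s) - ec * s ^ ((1:ℝ) - p)) := by
    rw [integral_sub hvint h1, h2]
  rw [hsub]
  have hgint : IntegrableOn (fun s : ℝ => C₀ * s ^ ((1:ℝ) - m - δ)) (Set.Ioi r) :=
    (integrableOn_Ioi_rpow_of_lt h1m hr0).const_mul C₀
  calc |∫ s in Set.Ioi r, (s * Real.exp (v s) - ec * s ^ ((1:ℝ) - p))|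
      ≤ ∫ s in Set.Ioi r, C₀ * s ^ ((1:ℝ) - m - δ) := by
        rw [← Real.norm_eq_abs]
        refine norm_integral_le_of_norm_le hgint ?_
        filter_upwards [ae_restrict_mem measurableSet_Ioi] with s hs
        have hs1 : (1:ℝ) ≤ s := le_trans hr (le_of_lt hs)
        have hs0 : (0:ℝ) < s := lt_of_lt_of_le one_pos hs1
        have e1 : s ^ ((1:ℝ) - p) = s * s ^ (-p) := by
          rw [show (1:ℝ) - p = 1 + -p by ring, Real.rpow_add hs0, Real.rpow_one]
        have e2 : s ^ ((1:ℝ) - m - δ) = s * s ^ (-m - δ) := by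
          rw [show (1:ℝ) - m - δ = 1 + (-m - δ) by ring, Real.rpow_add hs0, Real.rpow_one]
        rw [Real.norm_eq_abs, e1,
          show s * Real.exp (v s) - ec * (s * s ^ (-p))
            = s * (Real.exp (v s) - ec * s ^ (-p)) by ring,
          abs_mul, abs_of_pos hs0]
        calc s * |Real.exp (v s) - ec * s ^ (-p)|
            ≤ s * (C₀ * s ^ (-m - δ)) :=
              mul_le_mul_of_nonneg_left (hdec s hs1) hs0.le
          _ = C₀ * s ^ ((1:ℝ) - m - δ) := by rw [e2]; ring
    _ = (C₀ / (m + δ - 2)) * r ^ (2 - m - δ) := by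
        rw [integral_const_mul, integral_Ioi_rpow_of_lt h1m hr0,
          show (1:ℝ) - m - δ + 1 = 2 - m - δ by ring,
          show (2:ℝ) - m - δ = -(m + δ - 2) by ring, neg_div_neg_eq]
        ring

set_option maxHeartbeats 1000000 in
theorem radial_derivative_expansion
    (n : ℕ) (hn : 1 ≤ n) (A : Fin n → Fin n → ℝ) (u : Fin n → ℝ → ℝ)
    (hsol : IsRadialSolution A u (Set.Ioi 0))
    (hlim0 : ∀ i, Tendsto (fun r => r * deriv (u i) r) (nhdsWithin 0 (Set.Ioi 0)) (nhds 0))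
    (hint : ∀ i, IntegrableOn (fun r => r * Real.exp (u i r)) (Set.Ioi 0))
    (mi : Fin n → ℝ)
    (hmi : ∀ i, mi i = ∫ r in Set.Ioi (0:ℝ), (∑ j, A i j * Real.exp (u j r)) * r)
    (c : Fin n → ℝ) (m : ℝ) (hm_le : ∀ j, m ≤ mi j) (hm_min : ∃ j, mi j = m) (hm2 : 2 < m)
    (δ C₀ : ℝ) (hδ : δ ∈ Set.Ioo (0:ℝ) 1) (hC₀ : 0 < C₀)
    (hdecay : ∀ j, ∀ r : ℝ, 1 ≤ r →
      |Real.exp (u j r) - Real.exp (c j) * r ^ (-mi j)| ≤ C₀ * r ^ (-m - δ)) :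
    ∃ C > (0:ℝ), ∀ r : ℝ, 1 ≤ r → ∀ i,
      |deriv (u i) r + mi i / r -
          ∑ j, (A i j * Real.exp (c j) / (mi j - 2)) * r ^ (1 - mi j)|
        ≤ C * r ^ (1 - m - δ) := by
  obtain ⟨hδ0, hδ1⟩ := hδ
  have hmδ : (2:ℝ) < m + δ := by linarith
  set K : ℝ := C₀ / (m + δ - 2) with hK_def
  have hK : 0 < K := div_pos hC₀ (by linarith)
  set S : ℝ := ∑ i : Fin n, ∑ j : Fin n, |A i j| with hS_def
  have hS : 0 ≤ S := Finset.sum_nonneg fun i _ => Finset.sum_nonneg fun j _ => abs_nonneg _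
  refine ⟨K * S + 1, by positivity, ?_⟩
  intro r hr i
  have hr0 : (0:ℝ) < r := lt_of_lt_of_le one_pos hr
  set F : ℝ → ℝ := fun s => ∑ j, A i j * Real.exp (u j s) with hF_def
  have hFeq : (fun s : ℝ => s * F s) = fun s => ∑ j, A i j * (s * Real.exp (u j s)) := by
    funext s
    rw [hF_def, Finset.mul_sum]
    exact Finset.sum_congr rfl fun j _ => by ring
  have hsFint : IntegrableOn (fun s : ℝ => s * F s) (Set.Ioi 0) := by
    rw [hFeq]
    exact integrable_finset_sum _ fun j _ => ((hint j).const_mul (A i j))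
  -- derivative of s * u_i'(s)
  have hFderiv : ∀ x ∈ Set.Ioi (0:ℝ),
      HasDerivAt (fun s => s * deriv (u i) s) (-(x * F x)) x := by
    intro x hx
    obtain ⟨h1, h2, h3⟩ := hsol i x hx
    have hx0 : (x:ℝ) ≠ 0 := ne_of_gt hx
    have hD : HasDerivAt (fun s => s * deriv (u i) s)
        (1 * deriv (u i) x + x * deriv (deriv (u i)) x) x :=
      (hasDerivAt_id x).mul h2.hasDerivAt
    convert hD using 1
    have hFx : F x = ∑ j, A i j * Real.exp (u j x) := rfl
    have h5 : deriv (deriv (u i)) x = -F x - deriv (u i) x / x := by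
      rw [hFx]; linarith [h3]
    have h4 : x * (deriv (u i) x / x) = deriv (u i) x := by field_simp
    rw [h5, one_mul, mul_sub, h4]
    ring
  -- FTC identity
  have hmem : Set.Ioo (0:ℝ) r ∈ 𝓝[>] (0:ℝ) := Ioo_mem_nhdsGT_of_mem ⟨le_refl 0, hr0⟩
  have hftc : ∀ a ∈ Set.Ioo (0:ℝ) r,
      (∫ x in a..r, -(x * F x)) = r * deriv (u i) r - a * deriv (u i) a := by
    intro a ha
    have hsub : Set.uIcc a r ⊆ Set.Ioi (0:ℝ) := by
      rw [Set.uIcc_of_le ha.2.le]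
      exact fun x hx => lt_of_lt_of_le ha.1 hx.1
    have h0 : IntegrableOn (fun s : ℝ => s * F s) (Set.uIcc a r) := hsFint.mono_set hsub
    have h1 : IntervalIntegrable (fun x : ℝ => -(x * F x)) volume a r :=
      h0.intervalIntegrable.neg
    exact intervalIntegral.integral_eq_sub_of_hasDerivAt
      (fun x hx => hFderiv x (hsub hx)) h1
  have hsplit : ∀ a ∈ Set.Ioo (0:ℝ) r,
      (∫ s in Set.Ioc 0 a, s * F s) + (∫ s in Set.Ioc a r, s * F s)
        = ∫ s in Set.Ioc 0 r, s * F s := by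
    intro a ha
    rw [← setIntegral_union (Set.Ioc_disjoint_Ioc_of_le le_rfl) measurableSet_Ioc
        (hsFint.mono_set Set.Ioc_subset_Ioi_self)
        (hsFint.mono_set fun x hx => lt_trans ha.1 hx.1),
      Set.Ioc_union_Ioc_eq_Ioc ha.1.le ha.2.le]
  have hzero : Tendsto (fun a : ℝ => ∫ s in Set.Ioc 0 a, s * F s) (𝓝[>] (0:ℝ)) (𝓝 0) := by
    have hμ : Tendsto (fun a : ℝ => volume (Set.Ioc (0:ℝ) a)) (𝓝[>] (0:ℝ)) (𝓝 0) := by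
      have h0 : Tendsto (fun a : ℝ => a - 0) (𝓝[>] (0:ℝ)) (𝓝 0) := by
        simp only [sub_zero]; exact tendsto_id.mono_left (nhdsWithin_le_nhds : 𝓝[>] (0:ℝ) ≤ 𝓝 0)
      have h1 : Tendsto (fun a : ℝ => ENNReal.ofReal (a - 0)) (𝓝[>] (0:ℝ)) (𝓝 0) := by
        simpa [Function.comp_def] using (ENNReal.continuous_ofReal.tendsto 0).comp h0
      simpa [Real.volume_Ioc] using h1
    have hind : Integrable (Set.indicator (Set.Ioi 0) fun s : ℝ => s * F s) volume :=
      (integrable_indicator_iff measurableSet_Ioi).mpr hsFint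
    have h2 := hind.tendsto_setIntegral_nhds_zero hμ
    refine h2.congr fun a => ?_
    refine setIntegral_congr_fun measurableSet_Ioc fun x hx => ?_
    exact Set.indicator_of_mem hx.1 _
  have hkey : r * deriv (u i) r = -∫ s in Set.Ioc 0 r, s * F s := by
    have hL1 : Tendsto (fun a : ℝ => r * deriv (u i) r - a * deriv (u i) a) (𝓝[>] (0:ℝ))
        (𝓝 (r * deriv (u i) r - 0)) := tendsto_const_nhds.sub (hlim0 i)
    have hL2 : Tendsto
        (fun a : ℝ => (∫ s in Set.Ioc 0 a, s * F s) - ∫ s in Set.Ioc 0 r, s * F s)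
        (𝓝[>] (0:ℝ)) (𝓝 (0 - ∫ s in Set.Ioc 0 r, s * F s)) :=
      hzero.sub tendsto_const_nhds
    have heq : (fun a : ℝ => (∫ s in Set.Ioc 0 a, s * F s) - ∫ s in Set.Ioc 0 r, s * F s)
        =ᶠ[𝓝[>] (0:ℝ)] fun a : ℝ => r * deriv (u i) r - a * deriv (u i) a := by
      filter_upwards [hmem] with a ha
      have h1 := hftc a ha
      have h2 := hsplit a ha
      have h3 : (∫ x in a..r, -(x * F x)) = -(∫ s in Set.Ioc a r, s * F s) := by
        rw [intervalIntegral.integral_neg, intervalIntegral.integral_of_le ha.2.le]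
      have h4 : r * deriv (u i) r - a * deriv (u i) a
          = -(∫ s in Set.Ioc a r, s * F s) := by rw [← h3, h1]
      linarith
    have := tendsto_nhds_unique (hL2.congr' heq) hL1
    linarith
  -- split the integral over (0,∞)
  have hTint : IntegrableOn (fun s : ℝ => s * F s) (Set.Ioi r) :=
    hsFint.mono_set (Set.Ioi_subset_Ioi hr0.le)
  have hU : (∫ s in Set.Ioc 0 r, s * F s) + (∫ s in Set.Ioi r, s * F s)
      = ∫ s in Set.Ioi 0, s * F s := by
    rw [← setIntegral_union (Set.Ioc_disjoint_Ioi le_rfl) measurableSet_Ioi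
        (hsFint.mono_set Set.Ioc_subset_Ioi_self) hTint,
      Set.Ioc_union_Ioi_eq_Ioi hr0.le]
  have hmi' : mi i = ∫ s in Set.Ioi 0, s * F s := by
    rw [hmi i]
    have hfe : (fun s : ℝ => (∑ j, A i j * Real.exp (u j s)) * s) = fun s => s * F s := by
      funext s; rw [hF_def]; ring
    rw [hfe]
  have hderiv_eq : deriv (u i) r + mi i / r = (∫ s in Set.Ioi r, s * F s) / r := by
    have : r * deriv (u i) r = (∫ s in Set.Ioi r, s * F s) - mi i := by
      rw [hkey]; rw [hmi'] at *; linarith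
    field_simp
    linarith
  have hT : (∫ s in Set.Ioi r, s * F s)
      = ∑ j, A i j * ∫ s in Set.Ioi r, s * Real.exp (u j s) := by
    rw [hFeq, integral_finset_sum _
      (fun j _ => (((hint j).mono_set (Set.Ioi_subset_Ioi hr0.le)).const_mul (A i j)))]
    exact Finset.sum_congr rfl fun j _ => integral_const_mul _ _
  -- per-component tail estimates
  have hEj : ∀ j : Fin n,
      |(∫ s in Set.Ioi r, s * Real.exp (u j s))
        - Real.exp (c j) * r ^ (2 - mi j) / (mi j - 2)| ≤ K * r ^ (2 - m - δ) := by
    intro j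
    exact tail_est (u j) (Real.exp (c j)) (mi j) C₀ m δ r hr
      (lt_of_lt_of_le hm2 (hm_le j)) hmδ
      ((hint j).mono_set (Set.Ioi_subset_Ioi hr0.le))
      (fun s hs => hdecay j s hs)
  -- assemble
  have hsum_eq : ∑ j, (A i j * Real.exp (c j) / (mi j - 2)) * r ^ (1 - mi j)
      = (∑ j, A i j * (Real.exp (c j) * r ^ (2 - mi j) / (mi j - 2))) / r := by
    rw [Finset.sum_div]
    refine Finset.sum_congr rfl fun j _ => ?_
    have hrw : r ^ ((1:ℝ) - mi j) = r ^ ((2:ℝ) - mi j) / r := by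
      rw [show (1:ℝ) - mi j = (2 - mi j) - 1 by ring, Real.rpow_sub hr0, Real.rpow_one]
    rw [hrw]; ring
  have hmain : deriv (u i) r + mi i / r
      - ∑ j, (A i j * Real.exp (c j) / (mi j - 2)) * r ^ (1 - mi j)
      = (∑ j, A i j * ((∫ s in Set.Ioi r, s * Real.exp (u j s))
          - Real.exp (c j) * r ^ (2 - mi j) / (mi j - 2))) / r := by
    rw [hsum_eq, hderiv_eq, div_sub_div_same]
    congr 1
    rw [hT, ← Finset.sum_sub_distrib]
    exact Finset.sum_congr rfl fun j _ => by ring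
  rw [hmain, abs_div, abs_of_pos hr0]
  have hle_S : (∑ j, |A i j|) ≤ S := by
    rw [hS_def]
    exact Finset.single_le_sum (f := fun i => ∑ j, |A i j|)
      (fun i _ => Finset.sum_nonneg fun j _ => abs_nonneg _) (Finset.mem_univ i)
  have hb : |∑ j, A i j * ((∫ s in Set.Ioi r, s * Real.exp (u j s))
        - Real.exp (c j) * r ^ (2 - mi j) / (mi j - 2))| ≤ S * (K * r ^ (2 - m - δ)) := by
    calc |∑ j, A i j * ((∫ s in Set.Ioi r, s * Real.exp (u j s))
          - Real.exp (c j) * r ^ (2 - mi j) / (mi j - 2))|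
        ≤ ∑ j, |A i j * ((∫ s in Set.Ioi r, s * Real.exp (u j s))
          - Real.exp (c j) * r ^ (2 - mi j) / (mi j - 2))| :=
          Finset.abs_sum_le_sum_abs _ _
      _ ≤ ∑ j, |A i j| * (K * r ^ (2 - m - δ)) := by
          refine Finset.sum_le_sum fun j _ => ?_
          rw [abs_mul]
          exact mul_le_mul_of_nonneg_left (hEj j) (abs_nonneg _)
      _ = (∑ j, |A i j|) * (K * r ^ (2 - m - δ)) := (Finset.sum_mul _ _ _).symm
      _ ≤ S * (K * r ^ (2 - m - δ)) :=
          mul_le_mul_of_nonneg_right hle_S (by positivity)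
  calc |∑ j, A i j * ((∫ s in Set.Ioi r, s * Real.exp (u j s))
        - Real.exp (c j) * r ^ (2 - mi j) / (mi j - 2))| / r
      ≤ (S * (K * r ^ (2 - m - δ))) / r := by gcongr
    _ = (K * S) * r ^ (1 - m - δ) := by
        have hpow : r ^ ((2:ℝ) - m - δ) = r ^ ((1:ℝ) - m - δ) * r := by
          rw [show (2:ℝ) - m - δ = 1 - m - δ + 1 by ring]
          rw [Real.rpow_add hr0 (1 - m - δ) 1, Real.rpow_one]
        rw [hpow]
        field_simp
    _ ≤ (K * S + 1) * r ^ (1 - m - δ) := by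
        have hpos : (0:ℝ) ≤ r ^ ((1:ℝ) - m - δ) := Real.rpow_nonneg hr0.le _
        nlinarith
end

section
/- Let τ ∈ (0,1), C₀ > 0 and let f : ℝ² → ℝ be measurable with |f(y)| ≤ C₀·(1+|y|)^{−2−τ} for all y ∈ ℝ². Then for every δ ∈ (0, τ) there exists C > 0 such that for every x ∈ ℝ² with |x| ≥ 2, the function y ↦ (log|x−y| − log|x|)·f(y) is Lebesgue integrable on ℝ² and |∫_{ℝ²} (log|x−y| − log|x|)·f(y) dy| ≤ C·|x|^{−δ}. -/
open MeasureTheory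

lemma my_abs_log_le {r : ℝ} (h : 1/2 ≤ r) : |Real.log r| ≤ 2 * |r - 1| := by
  rcases le_or_gt 1 r with h1 | h1
  · rw [abs_of_nonneg (Real.log_nonneg h1), abs_of_nonneg (by linarith)]
    have := Real.log_le_sub_one_of_pos (by linarith : (0:ℝ) < r)
    linarith
  · have hr : (0:ℝ) < r := by linarith
    rw [abs_of_nonpos (Real.log_nonpos (by linarith) (by linarith)),
      abs_of_nonpos (by linarith)]
    have h2 : Real.log r⁻¹ ≤ r⁻¹ - 1 := Real.log_le_sub_one_of_pos (by positivity)
    rw [Real.log_inv] at h2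
    have hinv : r * r⁻¹ = 1 := mul_inv_cancel₀ hr.ne'
    have h3 : r⁻¹ - 1 ≤ 2 * (1 - r) := by
      nlinarith [mul_nonneg (by linarith : (0:ℝ) ≤ 1 - r) (by linarith : (0:ℝ) ≤ 2*r - 1),
        inv_pos.mpr hr]
    linarith

lemma my_log_le_rpow {t a : ℝ} (ht : 1 ≤ t) (ha : 0 < a) : Real.log t ≤ t ^ a / a := by
  have ht0 : (0:ℝ) < t := by linarith
  have h := Real.log_le_sub_one_of_pos (Real.rpow_pos_of_pos ht0 a)
  rw [Real.log_rpow ht0] at h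
  rw [le_div_iff₀ ha]
  nlinarith

lemma my_abs_log_le_rpow {t : ℝ} (h0 : 0 ≤ t) (h1 : t ≤ 1) :
    |Real.log t| ≤ 2 * t ^ (-(1/2) : ℝ) := by
  rcases eq_or_lt_of_le h0 with h | h
  · simp [← h, Real.zero_rpow (by norm_num : (-(1/2):ℝ) ≠ 0)]
  · have h2 : (1:ℝ) ≤ t⁻¹ := (one_le_inv₀ h).mpr h1
    have h3 := my_log_le_rpow h2 (by norm_num : (0:ℝ) < 1/2)
    have h4 : (t⁻¹) ^ ((1/2):ℝ) = t ^ (-(1/2):ℝ) := by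
      rw [Real.inv_rpow h0, ← Real.rpow_neg h0]
    rw [abs_of_nonpos (Real.log_nonpos h0 h1), ← Real.log_inv]
    rw [h4] at h3
    linarith

lemma my_key_log_bound {E : Type*} [NormedAddCommGroup E]
    {δ σ : ℝ} (hδ0 : 0 < δ) (hδ1 : δ ≤ 1) (hσδ : δ < σ)
    (x y : E) (hx : 2 ≤ ‖x‖) :
    |Real.log ‖x - y‖ - Real.log ‖x‖| ≤ (8 + 4 * Real.log 3 + 4 / (σ - δ)) *
      (‖x‖ ^ (-δ) * ((1 + ‖y‖) ^ σ * (1 + ‖x - y‖ ^ (-(1/2) : ℝ)))) := by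
  have hlog3 : (0:ℝ) ≤ Real.log 3 := Real.log_nonneg (by norm_num)
  have hsd : (0:ℝ) < σ - δ := by linarith
  set K : ℝ := 8 + 4 * Real.log 3 + 4 / (σ - δ) with hK_def
  have hsd4 : (0:ℝ) < 4 / (σ - δ) := by positivity
  have hK2 : (2:ℝ) ≤ K := by simp only [hK_def]; linarith
  set a := ‖x - y‖ with ha_def
  set b := ‖x‖ with hb_def
  set c := ‖y‖ with hc_def
  have hb0 : (0:ℝ) < b := by linarith
  have hc0 : (0:ℝ) ≤ c := norm_nonneg _
  have ha0 : (0:ℝ) ≤ a := norm_nonneg _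
  have habc : a ≤ b + c := norm_sub_le x y
  have hba : b - c ≤ a := by have := norm_sub_norm_le x y; linarith
  have hab : |a - b| ≤ c := by
    have h := abs_norm_sub_norm_le (x - y) x
    have he : x - y - x = -y := by abel
    rw [he, norm_neg] at h
    exact h
  have hQ0 : (0:ℝ) ≤ a ^ (-(1/2):ℝ) := Real.rpow_nonneg ha0 _
  have hQ1 : (1:ℝ) ≤ 1 + a ^ (-(1/2):ℝ) := by linarith
  have h1c : (1:ℝ) ≤ 1 + c := by linarith
  have h1c0 : (0:ℝ) < 1 + c := by linarith
  have hbd0 : (0:ℝ) ≤ b ^ (-δ) := Real.rpow_nonneg hb0.le _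
  rcases le_or_gt (2 * c) b with hcase | hcase
  · -- Region I : 2c ≤ b
    have ha_pos : (0:ℝ) < a := by linarith
    have hlog : Real.log a - Real.log b = Real.log (a / b) :=
      (Real.log_div ha_pos.ne' hb0.ne').symm
    have hr : (1:ℝ)/2 ≤ a / b := by rw [le_div_iff₀ hb0]; linarith
    have h1 : |Real.log (a / b)| ≤ 2 * |a / b - 1| := my_abs_log_le hr
    have h2 : |a / b - 1| = |a - b| / b := by
      rw [show a / b - 1 = (a - b) / b by field_simp, abs_div, abs_of_pos hb0]
    have h3 : |Real.log (a / b)| ≤ 2 * (c / b) := by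
      rw [h2] at h1
      have : |a - b| / b ≤ c / b := by gcongr
      linarith
    -- c/b ≤ (c/b)^δ
    have hcb1 : c / b ≤ 1 := by rw [div_le_one hb0]; linarith
    have hcb0 : (0:ℝ) ≤ c / b := by positivity
    have h4 : c / b ≤ (c / b) ^ δ := by
      rcases eq_or_lt_of_le hcb0 with h | h
      · rw [← h, Real.zero_rpow hδ0.ne']
      · calc c / b = (c / b) ^ (1:ℝ) := (Real.rpow_one _).symm
          _ ≤ (c / b) ^ δ := Real.rpow_le_rpow_of_exponent_ge h hcb1 hδ1
    have h5 : (c / b) ^ δ = c ^ δ * b ^ (-δ) := by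
      rw [Real.div_rpow hc0 hb0.le, Real.rpow_neg hb0.le, div_eq_mul_inv]
    have h6 : c ^ δ ≤ (1 + c) ^ σ := by
      calc c ^ δ ≤ (1 + c) ^ δ := Real.rpow_le_rpow hc0 (by linarith) hδ0.le
        _ ≤ (1 + c) ^ σ := Real.rpow_le_rpow_of_exponent_le h1c (by linarith)
    calc |Real.log a - Real.log b| = |Real.log (a/b)| := by rw [hlog]
      _ ≤ 2 * (c / b) := h3
      _ ≤ 2 * (c ^ δ * b ^ (-δ)) := by rw [← h5]; linarith [h4]
      _ ≤ 2 * ((1 + c) ^ σ * b ^ (-δ)) := by gcongr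
      _ = 2 * (b ^ (-δ) * ((1 + c) ^ σ * 1)) := by ring
      _ ≤ K * (b ^ (-δ) * ((1 + c) ^ σ * (1 + a ^ (-(1/2):ℝ)))) := by
          have hs : (0:ℝ) ≤ (1 + c) ^ σ := Real.rpow_nonneg h1c0.le _
          gcongr
  · -- Region II : b < 2c
    set P := (1 + c) ^ (σ - δ) with hP_def
    set Q := 1 + a ^ (-(1/2):ℝ) with hQ_def
    set L : ℝ := 2 + Real.log 3 + 1 / (σ - δ) with hL_def
    have hP1 : (1:ℝ) ≤ P := Real.one_le_rpow h1c hsd.le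
    have hP0 : (0:ℝ) < P := by linarith
    have hL0 : (0:ℝ) < L := by have : (0:ℝ) < 1 / (σ - δ) := by positivity
                               simp only [hL_def]; linarith
    have hlogc : Real.log (1 + c) ≤ P / (σ - δ) := my_log_le_rpow h1c hsd
    have hPsd : P / (σ - δ) = (1 / (σ - δ)) * P := by ring
    -- bound |log b|
    have hlb : |Real.log b| ≤ L * P := by
      rw [abs_of_nonneg (Real.log_nonneg (by linarith))]
      have hb2c : b ≤ 2 * (1 + c) := by linarith
      calc Real.log b ≤ Real.log (2 * (1 + c)) :=
            Real.log_le_log hb0 hb2c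
        _ = Real.log 2 + Real.log (1 + c) := Real.log_mul (by norm_num) h1c0.ne'
        _ ≤ Real.log 3 + (1 / (σ - δ)) * P := by
            rw [← hPsd]
            have h23 : Real.log 2 ≤ Real.log 3 := Real.log_le_log (by norm_num) (by norm_num)
            linarith
        _ ≤ L * P := by
            have h1 : Real.log 3 * 1 ≤ Real.log 3 * P := by
              apply mul_le_mul_of_nonneg_left hP1 hlog3
            simp only [hL_def]; linarith [h1, hP1]
    -- bound |log a|
    have hL2 : (2:ℝ) ≤ L := by
      have : (0:ℝ) < 1 / (σ - δ) := by positivity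
      simp only [hL_def]; linarith
    have hLP : L ≤ L * P := le_mul_of_one_le_right hL0.le hP1
    have hLP0 : (0:ℝ) < L * P := by positivity
    have hLPQ : L * P ≤ L * P * Q := le_mul_of_one_le_right hLP0.le hQ1
    have hQ0' : (0:ℝ) ≤ Q := by simp only [hQ_def]; linarith
    have hla : |Real.log a| ≤ L * P * Q := by
      rcases le_or_gt a 1 with haa | haa
      · have h1 : |Real.log a| ≤ 2 * a ^ (-(1/2):ℝ) := my_abs_log_le_rpow ha0 haa
        calc |Real.log a| ≤ 2 * a ^ (-(1/2):ℝ) := h1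
          _ ≤ 2 * Q := by simp only [hQ_def]; linarith
          _ ≤ (L * P) * Q := by
            apply mul_le_mul_of_nonneg_right (by linarith) hQ0'
      · have ha1 : (1:ℝ) < a := haa
        have h3c : a ≤ 3 * (1 + c) := by linarith
        rw [abs_of_nonneg (Real.log_nonneg ha1.le)]
        have h1 : Real.log 3 * 1 ≤ Real.log 3 * P := by
          apply mul_le_mul_of_nonneg_left hP1 hlog3
        calc Real.log a ≤ Real.log (3 * (1 + c)) := Real.log_le_log (by linarith) h3c
          _ = Real.log 3 + Real.log (1 + c) := Real.log_mul (by norm_num) h1c0.ne'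
          _ ≤ Real.log 3 + (1 / (σ - δ)) * P := by rw [← hPsd]; linarith
          _ ≤ L * P := by simp only [hL_def]; linarith [h1, hP1]
          _ ≤ L * P * Q := hLPQ
    -- combine
    have htot : |Real.log a - Real.log b| ≤ 2 * L * P * Q := by
      calc |Real.log a - Real.log b| ≤ |Real.log a| + |Real.log b| := abs_sub _ _
        _ ≤ L * P * Q + L * P := by linarith
        _ ≤ 2 * L * P * Q := by linarith [hLPQ]
    have hhalf : (1:ℝ)/2 ≤ b ^ (-δ) * (1 + c) ^ δ := by
      have hb2 : b ≤ 2 * (1 + c) := by linarith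
      have h1 : b ^ δ ≤ (2 * (1 + c)) ^ δ := Real.rpow_le_rpow hb0.le hb2 hδ0.le
      have h2 : (2 * (1 + c)) ^ δ = 2 ^ δ * (1 + c) ^ δ :=
        Real.mul_rpow (by norm_num) h1c0.le
      have h3 : (2:ℝ) ^ δ ≤ 2 := by
        calc (2:ℝ) ^ δ ≤ (2:ℝ) ^ (1:ℝ) :=
              Real.rpow_le_rpow_of_exponent_le (by norm_num) hδ1
          _ = 2 := Real.rpow_one 2
      have h1cd : (0:ℝ) ≤ (1 + c) ^ δ := Real.rpow_nonneg h1c0.le _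
      have h4 : b ^ δ ≤ 2 * (1 + c) ^ δ := by
        calc b ^ δ ≤ 2 ^ δ * (1 + c) ^ δ := by rw [← h2]; exact h1
          _ ≤ 2 * (1 + c) ^ δ := mul_le_mul_of_nonneg_right h3 h1cd
      have hbpos : (0:ℝ) < b ^ δ := Real.rpow_pos_of_pos hb0 _
      rw [Real.rpow_neg hb0.le, le_inv_mul_iff₀ hbpos]
      linarith
    have hsplit : (1 + c) ^ σ = (1 + c) ^ δ * P := by
      rw [hP_def, ← Real.rpow_add h1c0]
      ring_nf
    have hKL : K = 4 * L := by simp only [hK_def, hL_def]; ring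
    calc |Real.log a - Real.log b| ≤ 2 * L * P * Q := htot
      _ = 4 * L * ((1:ℝ)/2 * (P * Q)) := by ring
      _ ≤ 4 * L * ((b ^ (-δ) * (1 + c) ^ δ) * (P * Q)) := by
          have h1 : (1:ℝ)/2 * (P * Q) ≤ (b ^ (-δ) * (1 + c) ^ δ) * (P * Q) := by
            apply mul_le_mul_of_nonneg_right hhalf
            have hP0' : (0:ℝ) ≤ P := hP0.le
            have hQn : (0:ℝ) ≤ Q := hQ0'
            positivity
          exact mul_le_mul_of_nonneg_left h1 (by linarith : (0:ℝ) ≤ 4 * L)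
      _ = K * (b ^ (-δ) * ((1 + c) ^ σ * Q)) := by rw [hKL, hsplit]; ring

lemma my_integrable_sing :
    Integrable (fun z : EuclideanSpace ℝ (Fin 2) =>
      (Metric.ball (0 : EuclideanSpace ℝ (Fin 2)) 1).indicator
        (fun z => ‖z‖ ^ (-(1/2) : ℝ)) z) := by
  set F : EuclideanSpace ℝ (Fin 2) → ℝ := fun z =>
    (Metric.ball (0 : EuclideanSpace ℝ (Fin 2)) 1).indicator
      (fun z => ‖z‖ ^ (-(1/2) : ℝ)) z with hF_def
  have hmeas : Measurable F :=
    Measurable.indicator (measurable_norm.pow_const _) measurableSet_ball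
  have hnn : ∀ z, 0 ≤ F z := fun z =>
    Set.indicator_nonneg (fun z _ => Real.rpow_nonneg (norm_nonneg z) _) z
  refine ⟨hmeas.aestronglyMeasurable, ?_⟩
  rw [hasFiniteIntegral_iff_ofReal (ae_of_all _ hnn)]
  set B := volume (Metric.ball (0 : EuclideanSpace ℝ (Fin 2)) 1) with hB_def
  have hB : B < ⊤ := measure_ball_lt_top
  set g : ℕ → EuclideanSpace ℝ (Fin 2) → ENNReal := fun n z =>
    (Metric.ball (0 : EuclideanSpace ℝ (Fin 2)) ((1/2) ^ n)).indicator
      (fun _ => (2 : ENNReal) ^ (n+1)) z with hg_def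
  have hgmeas : ∀ n, Measurable (g n) := fun n =>
    Measurable.indicator measurable_const measurableSet_ball
  have hfr : Module.finrank ℝ (EuclideanSpace ℝ (Fin 2)) = 2 := by simp
  have hpt : ∀ z, ENNReal.ofReal (F z) ≤ ∑' n, g n z := by
    intro z
    by_cases hz : z ∈ Metric.ball (0 : EuclideanSpace ℝ (Fin 2)) 1
    · have hz1 : ‖z‖ < 1 := by rwa [mem_ball_zero_iff] at hz
      rcases eq_or_lt_of_le (norm_nonneg z) with h0 | h0
      · have hFz : F z = 0 := by
          rw [hF_def]
          simp only [Set.indicator_of_mem hz]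
          rw [← h0, Real.zero_rpow (by norm_num : (-(1/2):ℝ) ≠ 0)]
        simp [hFz]
      · have hex : ∃ n : ℕ, (1/2 : ℝ) ^ (n+1) ≤ ‖z‖ := by
          obtain ⟨n, hn⟩ := exists_pow_lt_of_lt_one h0 (by norm_num : (1/2:ℝ) < 1)
          exact ⟨n, by
            calc (1/2:ℝ) ^ (n+1) ≤ (1/2:ℝ) ^ n :=
                  pow_le_pow_of_le_one (by norm_num) (by norm_num) (Nat.le_succ n)
              _ ≤ ‖z‖ := hn.le⟩
        set n := Nat.find hex with hn_def
        have hn1 : (1/2 : ℝ) ^ (n+1) ≤ ‖z‖ := Nat.find_spec hex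
        have hn2 : ‖z‖ < (1/2 : ℝ) ^ n := by
          rcases Nat.eq_zero_or_pos n with h | h
          · rw [h]; simpa using hz1
          · have hmin := Nat.find_min hex (show n - 1 < n by omega)
            have he : n - 1 + 1 = n := by omega
            rw [he] at hmin
            exact not_le.mp hmin
        have hzball : z ∈ Metric.ball (0 : EuclideanSpace ℝ (Fin 2)) ((1/2) ^ n) :=
          mem_ball_zero_iff.mpr hn2
        have hreal : ‖z‖ ^ (-(1/2) : ℝ) ≤ (2:ℝ) ^ (n+1) := by
          have hpow_pos : (0:ℝ) < (1/2:ℝ) ^ (n+1) := by positivity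
          have hpow_le1 : ((1/2:ℝ) ^ (n+1)) ≤ 1 :=
            pow_le_one₀ (by norm_num) (by norm_num)
          have h1 : ((1/2:ℝ) ^ (n+1)) ≤ ‖z‖ ^ ((1/2) : ℝ) := by
            calc ((1/2:ℝ) ^ (n+1)) = ((1/2:ℝ) ^ (n+1)) ^ (1:ℝ) := (Real.rpow_one _).symm
              _ ≤ ((1/2:ℝ) ^ (n+1)) ^ ((1/2) : ℝ) :=
                  Real.rpow_le_rpow_of_exponent_ge hpow_pos hpow_le1 (by norm_num)
              _ ≤ ‖z‖ ^ ((1/2) : ℝ) := Real.rpow_le_rpow hpow_pos.le hn1 (by norm_num)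
          have h2 : (‖z‖ ^ ((1/2) : ℝ))⁻¹ ≤ ((1/2:ℝ) ^ (n+1))⁻¹ := inv_anti₀ hpow_pos h1
          rw [Real.rpow_neg (norm_nonneg z)]
          calc (‖z‖ ^ ((1/2) : ℝ))⁻¹ ≤ ((1/2:ℝ) ^ (n+1))⁻¹ := h2
            _ = (2:ℝ) ^ (n+1) := by rw [one_div, inv_pow, inv_inv]
        calc ENNReal.ofReal (F z) = ENNReal.ofReal (‖z‖ ^ (-(1/2) : ℝ)) := by
              rw [hF_def]; simp only [Set.indicator_of_mem hz]
          _ ≤ ENNReal.ofReal ((2:ℝ) ^ (n+1)) := ENNReal.ofReal_le_ofReal hreal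
          _ = (2 : ENNReal) ^ (n+1) := by
              rw [ENNReal.ofReal_pow (by norm_num)]
              norm_num
          _ = g n z := by rw [hg_def]; exact (Set.indicator_of_mem hzball (fun _ => (2:ENNReal)^(n+1))).symm
          _ ≤ ∑' m, g m z := ENNReal.le_tsum n
    · simp [hF_def, Set.indicator_of_notMem hz]
  calc ∫⁻ z, ENNReal.ofReal (F z) ≤ ∫⁻ z, ∑' n, g n z := lintegral_mono hpt
    _ = ∑' n, ∫⁻ z, g n z := lintegral_tsum fun n => (hgmeas n).aemeasurable
    _ ≤ ∑' n : ℕ, 2 * B * (ENNReal.ofReal (1/2)) ^ n := by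
        apply ENNReal.tsum_le_tsum
        intro n
        rw [hg_def]
        simp only []
        rw [lintegral_indicator measurableSet_ball, setLIntegral_const]
        have hvol : volume (Metric.ball (0 : EuclideanSpace ℝ (Fin 2)) ((1/2) ^ n)) =
            ENNReal.ofReal (((1/2:ℝ) ^ n) ^ 2) * B := by
          rw [hB_def, Measure.addHaar_ball volume 0 (by positivity : (0:ℝ) ≤ (1/2:ℝ)^n), hfr]
        rw [hvol]
        refine le_of_eq ?_
        have h4 : ENNReal.ofReal (((1/2:ℝ) ^ n) ^ 2) = (ENNReal.ofReal (1/4)) ^ n := by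
          rw [← pow_mul, show n * 2 = 2 * n by ring, pow_mul,
            ← ENNReal.ofReal_pow (by norm_num)]
          norm_num
        rw [h4]
        calc (2:ENNReal) ^ (n+1) * ((ENNReal.ofReal (1/4)) ^ n * B)
            = 2 * B * ((2 * ENNReal.ofReal (1/4)) ^ n) := by
              rw [mul_pow, pow_succ]; ring
          _ = 2 * B * (ENNReal.ofReal (1/2)) ^ n := by
              congr 2
              rw [show (2:ENNReal) = ENNReal.ofReal 2 by simp,
                ← ENNReal.ofReal_mul (by norm_num)]
              norm_num
    _ = 2 * B * ∑' n : ℕ, (ENNReal.ofReal (1/2)) ^ n := by rw [ENNReal.tsum_mul_left]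
    _ < ⊤ := by
        rw [ENNReal.tsum_geometric]
        apply ENNReal.mul_lt_top
        · exact ENNReal.mul_lt_top (by norm_num) hB
        · rw [ENNReal.inv_lt_top, tsub_pos_iff_lt, ENNReal.ofReal_lt_one]
          norm_num

theorem log_potential_estimate
    (τ C₀ : ℝ) (hτ : τ ∈ Set.Ioo (0:ℝ) 1) (hC₀ : 0 < C₀)
    (f : EuclideanSpace ℝ (Fin 2) → ℝ) (hf : Measurable f)
    (hbd : ∀ y : EuclideanSpace ℝ (Fin 2), |f y| ≤ C₀ * (1 + ‖y‖) ^ (-2 - τ)) :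
    ∀ δ ∈ Set.Ioo (0:ℝ) τ, ∃ C > (0:ℝ), ∀ x : EuclideanSpace ℝ (Fin 2), 2 ≤ ‖x‖ →
      Integrable (fun y => (Real.log ‖x - y‖ - Real.log ‖x‖) * f y) ∧
      |∫ y, (Real.log ‖x - y‖ - Real.log ‖x‖) * f y| ≤ C * ‖x‖ ^ (-δ) := by
  obtain ⟨hτ0, hτ1⟩ := hτ
  intro δ hδ
  obtain ⟨hδ0, hδτ⟩ := hδ
  set σ : ℝ := (δ + τ) / 2 with hσ_def
  have hσδ : δ < σ := by simp only [hσ_def]; linarith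
  have hστ : σ < τ := by simp only [hσ_def]; linarith
  have hδ1 : δ ≤ 1 := by linarith
  have hlog3 : (0:ℝ) ≤ Real.log 3 := Real.log_nonneg (by norm_num)
  set K : ℝ := 8 + 4 * Real.log 3 + 4 / (σ - δ) with hK_def
  have hsd : (0:ℝ) < σ - δ := by linarith
  have hK0 : (0:ℝ) < K := by
    have : (0:ℝ) < 4 / (σ - δ) := div_pos (by norm_num) hsd
    simp only [hK_def]; linarith
  -- integrable pieces
  set F : EuclideanSpace ℝ (Fin 2) → ℝ := fun z =>
    (Metric.ball (0 : EuclideanSpace ℝ (Fin 2)) 1).indicator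
      (fun z => ‖z‖ ^ (-(1/2) : ℝ)) z with hF_def
  have hFint : Integrable F := my_integrable_sing
  have hF_nonneg : ∀ z, 0 ≤ F z := fun z =>
    Set.indicator_nonneg (fun z _ => Real.rpow_nonneg (norm_nonneg z) _) z
  have hfr : ((Module.finrank ℝ (EuclideanSpace ℝ (Fin 2))) : ℝ) < 2 + τ - σ := by
    have : Module.finrank ℝ (EuclideanSpace ℝ (Fin 2)) = 2 := by simp
    rw [this]; push_cast; linarith
  have hg1 : Integrable (fun y : EuclideanSpace ℝ (Fin 2) =>
      (1 + ‖y‖) ^ (-(2 + τ - σ))) := integrable_one_add_norm hfr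
  set I₁ : ℝ := ∫ y : EuclideanSpace ℝ (Fin 2), (1 + ‖y‖) ^ (-(2 + τ - σ)) with hI₁_def
  set I₂ : ℝ := ∫ z : EuclideanSpace ℝ (Fin 2), F z with hI₂_def
  have hI₁0 : 0 ≤ I₁ := integral_nonneg fun y => Real.rpow_nonneg (by positivity) _
  have hI₂0 : 0 ≤ I₂ := integral_nonneg hF_nonneg
  have hCpos : (0:ℝ) < C₀ * K * 2 * (I₁ + I₂) + 1 := by
    have h := mul_nonneg (mul_nonneg (mul_nonneg hC₀.le hK0.le)
      (by norm_num : (0:ℝ) ≤ 2)) (add_nonneg hI₁0 hI₂0)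
    linarith
  refine ⟨C₀ * K * 2 * (I₁ + I₂) + 1, hCpos, ?_⟩
  intro x hx
  have hxd0 : (0:ℝ) ≤ ‖x‖ ^ (-δ) := Real.rpow_nonneg (norm_nonneg x) _
  have hG2 : Integrable (fun y => F (x - y)) := (integrable_comp_sub_left F x).2 hFint
  set G : EuclideanSpace ℝ (Fin 2) → ℝ := fun y =>
    C₀ * K * ‖x‖ ^ (-δ) * (2 * ((1 + ‖y‖) ^ (-(2 + τ - σ)) + F (x - y))) with hG_def
  have hGint : Integrable G := ((hg1.add hG2).const_mul 2).const_mul (C₀ * K * ‖x‖ ^ (-δ))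
  -- pointwise bound
  have hpt : ∀ y, ‖(Real.log ‖x - y‖ - Real.log ‖x‖) * f y‖ ≤ G y := by
    intro y
    have h1c0 : (0:ℝ) < 1 + ‖y‖ := by positivity
    have h1c : (1:ℝ) ≤ 1 + ‖y‖ := by linarith [norm_nonneg y]
    have key := my_key_log_bound hδ0 hδ1 hσδ x y hx
    have hfy := hbd y
    set a := ‖x - y‖ with ha_def
    have ha0 : (0:ℝ) ≤ a := norm_nonneg _
    set Q : ℝ := 1 + a ^ (-(1/2) : ℝ) with hQ_def
    have hQ0 : (0:ℝ) ≤ a ^ (-(1/2):ℝ) := Real.rpow_nonneg ha0 _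
    have hQ1 : (1:ℝ) ≤ Q := by simp only [hQ_def]; linarith
    set S : ℝ := (1 + ‖y‖) ^ σ with hS_def
    set T : ℝ := (1 + ‖y‖) ^ (-2 - τ) with hT_def
    set W : ℝ := (1 + ‖y‖) ^ (-(2 + τ - σ)) with hW_def
    have hS0 : (0:ℝ) ≤ S := Real.rpow_nonneg h1c0.le _
    have hT0 : (0:ℝ) ≤ T := Real.rpow_nonneg h1c0.le _
    have hW0 : (0:ℝ) ≤ W := Real.rpow_nonneg h1c0.le _
    have hW1 : W ≤ 1 := Real.rpow_le_one_of_one_le_of_nonpos h1c (by linarith)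
    have hST : S * T = W := by
      rw [hS_def, hT_def, hW_def, ← Real.rpow_add h1c0]
      congr 1
      ring
    have hclaim : W * Q ≤ 2 * (W + F (x - y)) := by
      rcases lt_or_ge a 1 with haa | haa
      · have hmem : x - y ∈ Metric.ball (0 : EuclideanSpace ℝ (Fin 2)) 1 :=
          mem_ball_zero_iff.mpr haa
        have hFxy : F (x - y) = a ^ (-(1/2) : ℝ) := by
          rw [hF_def]
          exact Set.indicator_of_mem hmem _
        have h1 : W * Q = W + W * a ^ (-(1/2):ℝ) := by rw [hQ_def]; ring
        have h2 : W * a ^ (-(1/2):ℝ) ≤ a ^ (-(1/2):ℝ) := by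
          apply mul_le_of_le_one_left hQ0 hW1
        rw [h1, hFxy]
        linarith
      · have hFxy : F (x - y) = 0 := by
          rw [hF_def]
          apply Set.indicator_of_notMem
          rw [mem_ball_zero_iff]
          exact not_lt.mpr haa
        have ha12 : a ^ (-(1/2):ℝ) ≤ 1 :=
          Real.rpow_le_one_of_one_le_of_nonpos haa (by norm_num)
        have hQ2 : Q ≤ 2 := by simp only [hQ_def]; linarith
        rw [hFxy]
        calc W * Q ≤ W * 2 := mul_le_mul_of_nonneg_left hQ2 hW0
          _ = 2 * (W + 0) := by ring
    have hrhs0 : (0:ℝ) ≤ K * (‖x‖ ^ (-δ) * (S * Q)) := by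
      apply mul_nonneg hK0.le
      apply mul_nonneg hxd0
      apply mul_nonneg hS0 (by linarith)
    calc ‖(Real.log a - Real.log ‖x‖) * f y‖
        = |Real.log a - Real.log ‖x‖| * |f y| := by rw [Real.norm_eq_abs, abs_mul]
      _ ≤ (K * (‖x‖ ^ (-δ) * (S * Q))) * (C₀ * T) :=
          mul_le_mul key hfy (abs_nonneg _) hrhs0
      _ = (C₀ * K * ‖x‖ ^ (-δ)) * ((S * T) * Q) := by ring
      _ = (C₀ * K * ‖x‖ ^ (-δ)) * (W * Q) := by rw [hST]
      _ ≤ (C₀ * K * ‖x‖ ^ (-δ)) * (2 * (W + F (x - y))) := by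
          apply mul_le_mul_of_nonneg_left hclaim
          positivity
      _ = G y := rfl
  have hmeas : Measurable (fun y : EuclideanSpace ℝ (Fin 2) =>
      (Real.log ‖x - y‖ - Real.log ‖x‖) * f y) := by
    have m1 : Measurable fun y : EuclideanSpace ℝ (Fin 2) => ‖x - y‖ :=
      (measurable_const.sub measurable_id).norm
    exact ((Real.measurable_log.comp m1).sub measurable_const).mul hf
  have hint : Integrable (fun y => (Real.log ‖x - y‖ - Real.log ‖x‖) * f y) :=
    hGint.mono' hmeas.aestronglyMeasurable (ae_of_all _ hpt)
  refine ⟨hint, ?_⟩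
  have hI₂x : (∫ y, F (x - y)) = I₂ := integral_sub_left_eq_self F volume x
  have hGval : (∫ y, G y) = C₀ * K * ‖x‖ ^ (-δ) * (2 * (I₁ + I₂)) := by
    rw [hG_def]
    rw [integral_const_mul]
    congr 1
    rw [integral_const_mul]
    congr 1
    rw [integral_add hg1 hG2, hI₂x]
  calc |∫ y, (Real.log ‖x - y‖ - Real.log ‖x‖) * f y|
      = ‖∫ y, (Real.log ‖x - y‖ - Real.log ‖x‖) * f y‖ := (Real.norm_eq_abs _).symm
    _ ≤ ∫ y, ‖(Real.log ‖x - y‖ - Real.log ‖x‖) * f y‖ := norm_integral_le_integral_norm _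
    _ ≤ ∫ y, G y := integral_mono hint.norm hGint hpt
    _ = (C₀ * K * 2 * (I₁ + I₂)) * ‖x‖ ^ (-δ) := by rw [hGval]; ring
    _ ≤ (C₀ * K * 2 * (I₁ + I₂) + 1) * ‖x‖ ^ (-δ) := by
        apply mul_le_mul_of_nonneg_right (by linarith) hxd0
end

section
/- Let n ≥ 1, let A = (a_{ij}) be a real n×n matrix, and let R > 0, M > 0. Then there exists L > 0, depending only on n, A, R and M, with the following property: if (u_1,…,u_n) and (v_1,…,v_n) are radial solutions of the Liouville system on (0,R] which extend continuously to [0,R], satisfy lim_{r→0+} r·u_i'(r) = lim_{r→0+} r·v_i'(r) = 0 for each i, and satisfy |u_i(r)| ≤ M and |v_i(r)| ≤ M for all r ∈ (0,R] and all i, then for every i and every r ∈ (0,R]: |u_i(r) − v_i(r)| ≤ L·∑_{j=1}^n |u_j(0) − v_j(0)|, where u_j(0), v_j(0) denote the continuous extensions at r = 0. -/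
open MeasureTheory Filter

lemma myExpLip (M a b : ℝ) (ha : |a| ≤ M) (hb : |b| ≤ M) :
    |Real.exp a - Real.exp b| ≤ Real.exp M * |a - b| := by
  have key : ∀ x ∈ Set.Icc (-M) M, HasDerivWithinAt Real.exp (Real.exp x) (Set.Icc (-M) M) x :=
    fun x _ => (Real.hasDerivAt_exp x).hasDerivWithinAt
  have bound : ∀ x ∈ Set.Icc (-M) M, ‖Real.exp x‖ ≤ Real.exp M := fun x hx => by
    rw [Real.norm_eq_abs, abs_of_pos (Real.exp_pos x)]
    exact Real.exp_le_exp.2 hx.2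
  have := (convex_Icc (-M) M).norm_image_sub_le_of_norm_hasDerivWithin_le key bound
    (abs_le.1 hb) (abs_le.1 ha)
  simpa [Real.norm_eq_abs] using this

lemma myGronwall (c δ R : ℝ) (hc : 0 < c) (hδ : 0 ≤ δ) (hR : 0 ≤ R)
    (W : ℝ → ℝ) (hW : Continuous W)
    (h : ∀ r ∈ Set.Icc (0:ℝ) R, W r ≤ δ + c * ∫ t in (0:ℝ)..r, W t) :
    ∀ r ∈ Set.Icc (0:ℝ) R, W r ≤ δ * Real.exp (c * R) := by
  set G : ℝ → ℝ := fun r => ∫ t in (0:ℝ)..r, W t with hG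
  have hGd : ∀ r : ℝ, HasDerivAt G (W r) r := fun r =>
    (hW.integral_hasStrictDerivAt 0 r).hasDerivAt
  set H : ℝ → ℝ := fun r => (δ + c * G r) * Real.exp (-(c * r)) with hH
  have hHd : ∀ r : ℝ, HasDerivAt H
      ((c * W r) * Real.exp (-(c * r)) + (δ + c * G r) * (-c * Real.exp (-(c * r)))) r := by
    intro r
    have h1 : HasDerivAt (fun r => δ + c * G r) (c * W r) r :=
      (((hGd r).const_mul c).const_add δ)
    have h2 : HasDerivAt (fun r : ℝ => Real.exp (-(c * r))) (-c * Real.exp (-(c * r))) r := by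
      have : HasDerivAt (fun r : ℝ => -(c * r)) (-c) r := by
        simpa [Pi.neg_def] using ((hasDerivAt_id r).const_mul c).neg
      simpa [mul_comm, Function.comp_def] using (Real.hasDerivAt_exp (-(c * r))).comp r this
    exact h1.mul h2
  have hHanti : AntitoneOn H (Set.Icc 0 R) := by
    apply antitoneOn_of_deriv_nonpos (convex_Icc 0 R)
    · exact fun r _ => ((hHd r).continuousAt).continuousWithinAt
    · exact fun r _ => ((hHd r).differentiableAt).differentiableWithinAt
    · intro x hx
      rw [interior_Icc] at hx
      rw [(hHd x).deriv]
      have hWx : W x ≤ δ + c * G x := h x ⟨le_of_lt hx.1, le_of_lt hx.2⟩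
      have hexp := Real.exp_pos (-(c * x))
      nlinarith [mul_pos hc hexp, mul_nonneg (mul_nonneg hc.le hexp.le) (sub_nonneg.2 hWx)]
  intro r hr
  have hH0 : H 0 = δ := by simp [hH, hG]
  have := hHanti (Set.left_mem_Icc.2 hR) hr hr.1
  rw [hH0] at this
  have hGr : δ + c * G r ≤ δ * Real.exp (c * r) := by
    have hexp := Real.exp_pos (-(c * r))
    have h1 : (δ + c * G r) * Real.exp (-(c * r)) ≤ δ := this
    have h2 : Real.exp (-(c * r)) * Real.exp (c * r) = 1 := by
      rw [← Real.exp_add]; simp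
    nlinarith [Real.exp_pos (c * r), mul_le_mul_of_nonneg_right h1 (Real.exp_pos (c*r)).le]
  have hWr : W r ≤ δ + c * G r := h r hr
  calc W r ≤ δ + c * G r := hWr
    _ ≤ δ * Real.exp (c * r) := hGr
    _ ≤ δ * Real.exp (c * R) := by
        apply mul_le_mul_of_nonneg_left (Real.exp_le_exp.2 _) hδ
        exact mul_le_mul_of_nonneg_left hr.2 (le_of_lt hc)

theorem continuous_dependence_on_initial_data
    (n : ℕ) (hn : 1 ≤ n) (A : Fin n → Fin n → ℝ) (R M : ℝ) (hR : 0 < R) (hM : 0 < M) :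
    ∃ L > (0:ℝ), ∀ u v : Fin n → ℝ → ℝ,
      IsRadialSolution A u (Set.Ioc 0 R) → IsRadialSolution A v (Set.Ioc 0 R) →
      (∀ i, ContinuousOn (u i) (Set.Icc 0 R)) → (∀ i, ContinuousOn (v i) (Set.Icc 0 R)) →
      (∀ i, Tendsto (fun r => r * deriv (u i) r) (nhdsWithin 0 (Set.Ioi 0)) (nhds 0)) →
      (∀ i, Tendsto (fun r => r * deriv (v i) r) (nhdsWithin 0 (Set.Ioi 0)) (nhds 0)) →
      (∀ i, ∀ r ∈ Set.Ioc 0 R, |u i r| ≤ M) →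
      (∀ i, ∀ r ∈ Set.Ioc 0 R, |v i r| ≤ M) →
      ∀ i, ∀ r ∈ Set.Ioc 0 R, |u i r - v i r| ≤ L * ∑ j, |u j 0 - v j 0| := by
  classical
  set K : ℝ := ∑ i : Fin n, ∑ j : Fin n, |A i j| with hKdef
  have hK0 : 0 ≤ K := Finset.sum_nonneg fun i _ => Finset.sum_nonneg fun j _ => abs_nonneg _
  have hAK : ∀ i j : Fin n, |A i j| ≤ K := by
    intro i j
    calc |A i j| ≤ ∑ j' : Fin n, |A i j'| :=
          Finset.single_le_sum (f := fun j' => |A i j'|) (fun j' _ => abs_nonneg _)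
            (Finset.mem_univ j)
      _ ≤ K := Finset.single_le_sum
          (f := fun i' => ∑ j' : Fin n, |A i' j'|)
          (fun i' _ => Finset.sum_nonneg fun j' _ => abs_nonneg _) (Finset.mem_univ i)
  set KE : ℝ := Real.exp M * K with hKEdef
  have hKE0 : 0 ≤ KE := mul_nonneg (Real.exp_pos M).le hK0
  set c : ℝ := (n : ℝ) * KE * R + 1 with hcdef
  have hc0 : 0 < c := by positivity
  refine ⟨Real.exp (c * R), Real.exp_pos _, ?_⟩
  intro u v hu hv hcu hcv htu htv hbu hbv
  -- clamp to [0,R]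
  set cl : ℝ → ℝ := fun t => max 0 (min t R) with hcl
  have hclmem : ∀ t : ℝ, cl t ∈ Set.Icc (0:ℝ) R := by
    intro t
    constructor
    · exact le_max_left _ _
    · exact max_le (le_of_lt hR) (min_le_right _ _)
  have hcleq : ∀ t ∈ Set.Icc (0:ℝ) R, cl t = t := by
    intro t ht
    simp [hcl, min_eq_left ht.2, max_eq_right ht.1]
  have hclcont : Continuous cl := continuous_const.max (continuous_id.min continuous_const)
  -- the comparison function W
  set W : ℝ → ℝ := fun t => ∑ j : Fin n, |u j (cl t) - v j (cl t)| with hW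
  have hWc : Continuous W := by
    apply continuous_finset_sum
    intro j _
    have h1 : Continuous fun t => u j (cl t) :=
      (hcu j).comp_continuous hclcont hclmem
    have h2 : Continuous fun t => v j (cl t) :=
      (hcv j).comp_continuous hclcont hclmem
    exact (h1.sub h2).abs
  have hWeq : ∀ t ∈ Set.Icc (0:ℝ) R, W t = ∑ j : Fin n, |u j t - v j t| := by
    intro t ht
    simp only [hW, hcleq t ht]
  have hWnn : ∀ t : ℝ, 0 ≤ W t := fun t => Finset.sum_nonneg fun j _ => abs_nonneg _
  set δ : ℝ := ∑ j : Fin n, |u j 0 - v j 0| with hδdef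
  have hδ0 : 0 ≤ δ := Finset.sum_nonneg fun j _ => abs_nonneg _
  have hW0 : W 0 = δ := hWeq 0 (Set.left_mem_Icc.2 hR.le)
  set G : ℝ → ℝ := fun r => ∫ t in (0:ℝ)..r, W t with hGdef
  have hGnn : ∀ r : ℝ, 0 ≤ r → 0 ≤ G r := fun r hr =>
    intervalIntegral.integral_nonneg hr fun t _ => hWnn t
  have hGmono : ∀ a b : ℝ, a ≤ b → G a ≤ G b := by
    intro a b hab
    have h1 : G a + ∫ t in a..b, W t = G b :=
      intervalIntegral.integral_add_adjacent_intervals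
        (hWc.intervalIntegrable 0 a) (hWc.intervalIntegrable a b)
    have h2 : 0 ≤ ∫ t in a..b, W t :=
      intervalIntegral.integral_nonneg hab fun t _ => hWnn t
    linarith
  -- the Lipschitz bound on the nonlinear term
  have hLip : ∀ i : Fin n, ∀ t ∈ Set.Ioc (0:ℝ) R,
      |∑ j : Fin n, A i j * (Real.exp (u j t) - Real.exp (v j t))| ≤ KE * W t := by
    intro i t ht
    have htI : t ∈ Set.Icc (0:ℝ) R := ⟨ht.1.le, ht.2⟩
    calc |∑ j : Fin n, A i j * (Real.exp (u j t) - Real.exp (v j t))|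
        ≤ ∑ j : Fin n, |A i j * (Real.exp (u j t) - Real.exp (v j t))| :=
          Finset.abs_sum_le_sum_abs _ _
      _ ≤ ∑ j : Fin n, K * (Real.exp M * |u j t - v j t|) := by
          apply Finset.sum_le_sum
          intro j _
          rw [abs_mul]
          exact mul_le_mul (hAK i j) (myExpLip M _ _ (hbu j t ht) (hbv j t ht))
            (abs_nonneg _) hK0
      _ = KE * W t := by
          rw [hWeq t htI, hKEdef, Finset.mul_sum]
          exact Finset.sum_congr rfl fun j _ => by ring

  -- Step A: bound on the difference of derivatives
  have keyA : ∀ i : Fin n, ∀ r ∈ Set.Ioc (0:ℝ) R,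
      |deriv (u i) r - deriv (v i) r| ≤ KE * G r := by
    intro i r hr
    set h : ℝ → ℝ :=
      fun t => -(t * ∑ j : Fin n, A i j * (Real.exp (u j t) - Real.exp (v j t))) with hhdef
    have hhc : ContinuousOn h (Set.Icc (0:ℝ) R) := by
      apply ContinuousOn.neg
      apply ContinuousOn.mul continuousOn_id
      apply continuousOn_finset_sum
      intro j _
      exact ContinuousOn.mul continuousOn_const
        ((Real.continuous_exp.comp_continuousOn (hcu j)).sub
          (Real.continuous_exp.comp_continuousOn (hcv j)))
    have hφ : ∀ t ∈ Set.Ioc (0:ℝ) R,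
        HasDerivAt (fun s => s * (deriv (u i) s - deriv (v i) s)) (h t) t := by
      intro t ht
      obtain ⟨hud, hud2, hueq⟩ := hu i t ht
      obtain ⟨hvd, hvd2, hveq⟩ := hv i t ht
      have ht0 : (t:ℝ) ≠ 0 := ne_of_gt ht.1
      have hdu : HasDerivAt (fun s => deriv (u i) s - deriv (v i) s)
          (deriv (deriv (u i)) t - deriv (deriv (v i)) t) t :=
        (hud2.hasDerivAt).sub (hvd2.hasDerivAt)
      have hprod : HasDerivAt (fun s => s * (deriv (u i) s - deriv (v i) s))
          (1 * (deriv (u i) t - deriv (v i) t)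
            + t * (deriv (deriv (u i)) t - deriv (deriv (v i)) t)) t := by
        simpa [Pi.mul_def] using (hasDerivAt_id t).mul hdu
      have e1 : t * deriv (deriv (u i)) t + deriv (u i) t
          = -(t * ∑ j : Fin n, A i j * Real.exp (u j t)) := by
        have h' : deriv (deriv (u i)) t
            = -∑ j : Fin n, A i j * Real.exp (u j t) - deriv (u i) t / t := by linarith
        rw [h']; field_simp; ring
      have e2 : t * deriv (deriv (v i)) t + deriv (v i) t
          = -(t * ∑ j : Fin n, A i j * Real.exp (v j t)) := by
        have h' : deriv (deriv (v i)) t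
            = -∑ j : Fin n, A i j * Real.exp (v j t) - deriv (v i) t / t := by linarith
        rw [h']; field_simp; ring
      have eS : (∑ j : Fin n, A i j * (Real.exp (u j t) - Real.exp (v j t)))
          = (∑ j : Fin n, A i j * Real.exp (u j t))
            - ∑ j : Fin n, A i j * Real.exp (v j t) := by
        rw [← Finset.sum_sub_distrib]
        exact Finset.sum_congr rfl fun j _ => by ring
      have hval : 1 * (deriv (u i) t - deriv (v i) t)
          + t * (deriv (deriv (u i)) t - deriv (deriv (v i)) t) = h t := by
        show _ = -(t * ∑ j : Fin n, A i j * (Real.exp (u j t) - Real.exp (v j t)))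
        rw [eS]
        linear_combination e1 - e2
      rwa [hval] at hprod
    -- comparison integrand
    have hgc : Continuous (fun t : ℝ => KE * (t * W t)) :=
      continuous_const.mul (continuous_id.mul hWc)
    have key_eps : ∀ ε ∈ Set.Ioc (0:ℝ) r, |r * (deriv (u i) r - deriv (v i) r)|
        ≤ |ε * (deriv (u i) ε - deriv (v i) ε)| + ∫ t in (0:ℝ)..r, KE * (t * W t) := by
      intro ε hε
      have hεr : ε ≤ r := hε.2
      have huIcc : Set.uIcc ε r = Set.Icc ε r := Set.uIcc_of_le hεr
      have hsub : Set.Icc ε r ⊆ Set.Ioc (0:ℝ) R := fun x hx =>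
        ⟨lt_of_lt_of_le hε.1 hx.1, le_trans hx.2 hr.2⟩
      have hsub2 : Set.Icc ε r ⊆ Set.Icc (0:ℝ) R := fun x hx =>
        ⟨le_trans hε.1.le hx.1, le_trans hx.2 hr.2⟩
      have hint : IntervalIntegrable h volume ε r :=
        ((hhc.mono hsub2).mono (by rw [huIcc])).intervalIntegrable
      have hftc : (∫ t in ε..r, h t)
          = r * (deriv (u i) r - deriv (v i) r) - ε * (deriv (u i) ε - deriv (v i) ε) :=
        intervalIntegral.integral_eq_sub_of_hasDerivAt
          (fun t ht => hφ t (hsub (huIcc ▸ ht))) hint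
      have habs : |∫ t in ε..r, h t| ≤ ∫ t in ε..r, |h t| :=
        intervalIntegral.abs_integral_le_integral_abs hεr
      have hmono : (∫ t in ε..r, |h t|) ≤ ∫ t in ε..r, KE * (t * W t) := by
        apply intervalIntegral.integral_mono_on hεr
        · exact (((hhc.mono hsub2).abs).mono (by rw [huIcc])).intervalIntegrable
        · exact hgc.intervalIntegrable _ _
        · intro t htm
          have htIoc : t ∈ Set.Ioc (0:ℝ) R := hsub htm
          have ht0 : (0:ℝ) ≤ t := htIoc.1.le
          have heq : |h t| = t * |∑ j : Fin n, A i j * (Real.exp (u j t) - Real.exp (v j t))| := by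
            rw [hhdef]
            simp [abs_mul, abs_of_nonneg ht0]
          rw [heq]
          calc t * |∑ j : Fin n, A i j * (Real.exp (u j t) - Real.exp (v j t))|
              ≤ t * (KE * W t) := mul_le_mul_of_nonneg_left (hLip i t htIoc) ht0
            _ = KE * (t * W t) := by ring
      have hext : (∫ t in ε..r, KE * (t * W t)) ≤ ∫ t in (0:ℝ)..r, KE * (t * W t) := by
        have hadd : (∫ t in (0:ℝ)..ε, KE * (t * W t)) + ∫ t in ε..r, KE * (t * W t)
            = ∫ t in (0:ℝ)..r, KE * (t * W t) :=
          intervalIntegral.integral_add_adjacent_intervals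
            (hgc.intervalIntegrable _ _) (hgc.intervalIntegrable _ _)
        have hnn : 0 ≤ ∫ t in (0:ℝ)..ε, KE * (t * W t) :=
          intervalIntegral.integral_nonneg hε.1.le fun t ht =>
            mul_nonneg hKE0 (mul_nonneg ht.1 (hWnn t))
        linarith
      have heq2 : r * (deriv (u i) r - deriv (v i) r)
          = (∫ t in ε..r, h t) + ε * (deriv (u i) ε - deriv (v i) ε) := by linarith [hftc]
      calc |r * (deriv (u i) r - deriv (v i) r)|
          = |(∫ t in ε..r, h t) + ε * (deriv (u i) ε - deriv (v i) ε)| := by rw [heq2]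
        _ ≤ |∫ t in ε..r, h t| + |ε * (deriv (u i) ε - deriv (v i) ε)| := abs_add_le _ _
        _ ≤ |ε * (deriv (u i) ε - deriv (v i) ε)| + ∫ t in (0:ℝ)..r, KE * (t * W t) := by
            linarith [habs, hmono, hext]
    have htend : Tendsto
        (fun ε => |ε * (deriv (u i) ε - deriv (v i) ε)| + ∫ t in (0:ℝ)..r, KE * (t * W t))
        (nhdsWithin 0 (Set.Ioi 0)) (nhds (0 + ∫ t in (0:ℝ)..r, KE * (t * W t))) := by
      apply Tendsto.add_const
      have h1 : Tendsto (fun ε => ε * deriv (u i) ε - ε * deriv (v i) ε)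
          (nhdsWithin 0 (Set.Ioi 0)) (nhds (0 - 0)) := (htu i).sub (htv i)
      have h2 : Tendsto (fun ε => ε * (deriv (u i) ε - deriv (v i) ε))
          (nhdsWithin 0 (Set.Ioi 0)) (nhds 0) := by
        simpa [mul_sub] using h1
      simpa using h2.abs
    have hbound : |r * (deriv (u i) r - deriv (v i) r)|
        ≤ 0 + ∫ t in (0:ℝ)..r, KE * (t * W t) := by
      refine ge_of_tendsto htend ?_
      filter_upwards [Ioc_mem_nhdsGT hr.1] with ε hε
      exact key_eps ε hε
    have hJ : (∫ t in (0:ℝ)..r, KE * (t * W t)) ≤ r * (KE * G r) := by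
      have h1 : (∫ t in (0:ℝ)..r, KE * (t * W t)) ≤ ∫ t in (0:ℝ)..r, (KE * r) * W t := by
        apply intervalIntegral.integral_mono_on hr.1.le
        · exact hgc.intervalIntegrable _ _
        · exact (continuous_const.mul hWc).intervalIntegrable _ _
        · intro t ht
          nlinarith [mul_nonneg (mul_nonneg hKE0 (hWnn t)) (sub_nonneg.2 ht.2)]
      have h2 : (∫ t in (0:ℝ)..r, (KE * r) * W t) = (KE * r) * G r :=
        intervalIntegral.integral_const_mul _ _
      rw [h2] at h1
      linarith [h1]
    have hfin : r * |deriv (u i) r - deriv (v i) r| ≤ r * (KE * G r) := by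
      have habsr : |r * (deriv (u i) r - deriv (v i) r)|
          = r * |deriv (u i) r - deriv (v i) r| := by
        rw [abs_mul, abs_of_pos hr.1]
      rw [← habsr]
      linarith [hbound, hJ]
    exact le_of_mul_le_mul_left hfin hr.1

  -- Step B: Gronwall-type integral inequality for W
  have keyB : ∀ r ∈ Set.Icc (0:ℝ) R, W r ≤ δ + c * G r := by
    intro r hrI
    rcases eq_or_lt_of_le hrI.1 with h0 | hr0
    · have hG00 : G 0 = 0 := intervalIntegral.integral_same
      rw [← h0, hW0, hG00]
      linarith
    · have hr : r ∈ Set.Ioc (0:ℝ) R := ⟨hr0, hrI.2⟩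
      have hGrnn : 0 ≤ G r := hGnn r hr0.le
      have hstep : ∀ i : Fin n, |u i r - v i r| ≤ |u i 0 - v i 0| + KE * R * G r := by
        intro i
        have hMVT : ∀ ε ∈ Set.Ioc (0:ℝ) r,
            |(u i r - v i r) - (u i ε - v i ε)| ≤ (KE * G r) * r := by
          intro ε hε
          have hεr : ε ≤ r := hε.2
          have key := (convex_Icc ε r).norm_image_sub_le_of_norm_hasDerivWithin_le
            (f := fun t => u i t - v i t)
            (f' := fun t => deriv (u i) t - deriv (v i) t)
            (fun t ht => by
              have htIoc : t ∈ Set.Ioc (0:ℝ) R := ⟨lt_of_lt_of_le hε.1 ht.1, le_trans ht.2 hr.2⟩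
              obtain ⟨hud, _, _⟩ := hu i t htIoc
              obtain ⟨hvd, _, _⟩ := hv i t htIoc
              exact ((hud.hasDerivAt).sub (hvd.hasDerivAt)).hasDerivWithinAt)
            (fun t ht => by
              have htIoc : t ∈ Set.Ioc (0:ℝ) R := ⟨lt_of_lt_of_le hε.1 ht.1, le_trans ht.2 hr.2⟩
              rw [Real.norm_eq_abs]
              calc |deriv (u i) t - deriv (v i) t| ≤ KE * G t := keyA i t htIoc
                _ ≤ KE * G r := mul_le_mul_of_nonneg_left (hGmono t r ht.2) hKE0)
            (Set.left_mem_Icc.2 hεr) (Set.right_mem_Icc.2 hεr)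
          rw [Real.norm_eq_abs, Real.norm_eq_abs] at key
          have h1 : |r - ε| ≤ r := by
            rw [abs_of_nonneg (by linarith)]
            linarith [hε.1]
          calc |(u i r - v i r) - (u i ε - v i ε)| ≤ (KE * G r) * |r - ε| := key
            _ ≤ (KE * G r) * r :=
              mul_le_mul_of_nonneg_left h1 (mul_nonneg hKE0 hGrnn)
        have heqf : nhdsWithin (0:ℝ) (Set.Ioc 0 R) = nhdsWithin 0 (Set.Ioi 0) :=
          nhdsWithin_Ioc_eq_nhdsGT hR
        have h1 : Tendsto (fun ε => u i ε) (nhdsWithin 0 (Set.Ioi 0)) (nhds (u i 0)) := by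
          have hc0 := hcu i 0 (Set.left_mem_Icc.2 hR.le)
          exact hc0.mono_left (by rw [← heqf]; exact nhdsWithin_mono _ Set.Ioc_subset_Icc_self)
        have h2 : Tendsto (fun ε => v i ε) (nhdsWithin 0 (Set.Ioi 0)) (nhds (v i 0)) := by
          have hc0 := hcv i 0 (Set.left_mem_Icc.2 hR.le)
          exact hc0.mono_left (by rw [← heqf]; exact nhdsWithin_mono _ Set.Ioc_subset_Icc_self)
        have hcont0 : Tendsto (fun ε => |(u i r - v i r) - (u i ε - v i ε)|)
            (nhdsWithin 0 (Set.Ioi 0)) (nhds |(u i r - v i r) - (u i 0 - v i 0)|) :=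
          ((tendsto_const_nhds).sub (h1.sub h2)).abs
        have hlim : |(u i r - v i r) - (u i 0 - v i 0)| ≤ (KE * G r) * r := by
          refine le_of_tendsto hcont0 ?_
          filter_upwards [Ioc_mem_nhdsGT hr0] with ε hε
          exact hMVT ε hε
        have htri : |u i r - v i r|
            ≤ |u i 0 - v i 0| + |(u i r - v i r) - (u i 0 - v i 0)| := by
          linarith [abs_sub_abs_le_abs_sub (u i r - v i r) (u i 0 - v i 0)]
        have hRr : (KE * G r) * r ≤ KE * R * G r := by
          nlinarith [mul_nonneg hKE0 hGrnn, sub_nonneg.2 hr.2]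
        linarith
      have hsum : W r ≤ δ + (n:ℝ) * (KE * R * G r) := by
        rw [hWeq r hrI, hδdef]
        calc (∑ j : Fin n, |u j r - v j r|)
            ≤ ∑ j : Fin n, (|u j 0 - v j 0| + KE * R * G r) :=
              Finset.sum_le_sum fun j _ => hstep j
          _ = (∑ j : Fin n, |u j 0 - v j 0|) + (n:ℝ) * (KE * R * G r) := by
              rw [Finset.sum_add_distrib, Finset.sum_const, Finset.card_univ, Fintype.card_fin,
                nsmul_eq_mul]
      have hcle : (n:ℝ) * (KE * R * G r) ≤ c * G r := by
        rw [hcdef]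
        nlinarith [hGrnn]
      linarith
  -- Gronwall and conclusion
  have main := myGronwall c δ R hc0 hδ0 hR.le W hWc keyB
  intro i r hr
  have hrI : r ∈ Set.Icc (0:ℝ) R := ⟨hr.1.le, hr.2⟩
  have h1 : |u i r - v i r| ≤ W r := by
    rw [hWeq r hrI]
    exact Finset.single_le_sum (f := fun j => |u j r - v j r|)
      (fun j _ => abs_nonneg _) (Finset.mem_univ i)
  calc |u i r - v i r| ≤ W r := h1
    _ ≤ δ * Real.exp (c * R) := main r hrI
    _ = Real.exp (c * R) * ∑ j : Fin n, |u j 0 - v j 0| := by rw [hδdef]; ring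
end
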